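/- arXiv:2605.22669 — 5 statements merged into one kernel-verified Lean document; each statement's English description precedes it below -/
import Mathlib

section
/- Let G be a finite group, x ∈ G a p-element, and Q ≤ G a p-subgroup containing x. Then the normalizer N_G(Q) is contained in Sub_G(x). -/
/-- `H` is a normal subgroup of `K` (in particular `H ≤ K`). -/
def normalIn {G : Type*} [Group G] (H K : Subgroup G) : Prop :=
  H ≤ K ∧ ∀ k ∈ K, ∀ h ∈ H, k * h * k⁻¹ ∈ H

/-- `H` is subnormal in `K`: there is a chain `H = H₀ ⊴ H₁ ⊴ ⋯ ⊴ Hₙ = K`. -/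
def subnormalIn {G : Type*} [Group G] (H K : Subgroup G) : Prop :=
  ∃ n : ℕ, ∃ f : Fin (n + 1) → Subgroup G,
    f 0 = H ∧ f (Fin.last n) = K ∧ ∀ i : Fin n, normalIn (f i.castSucc) (f i.succ)

/-- The subnormalizer subset `S_G(x) = {y ∈ G : ⟨x⟩ is subnormal in ⟨x, y⟩}`. -/
def subnSet {G : Type*} [Group G] (x : G) : Set G :=
  {y | subnormalIn (Subgroup.zpowers x) (Subgroup.closure {x, y})}

/-- The subnormalizer `Sub_G(x) = ⟨S_G(x)⟩`. -/
def SubG {G : Type*} [Group G] (x : G) : Subgroup G :=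
  Subgroup.closure (subnSet x)

theorem subnormalIn_refl {G : Type*} [Group G] (H : Subgroup G) : subnormalIn H H :=
  ⟨0, fun _ => H, rfl, rfl, fun i => i.elim0⟩

/-- Prepend a normal step to a subnormal chain. -/
theorem subnormalIn_cons {G : Type*} [Group G] {H N K : Subgroup G}
    (h1 : normalIn H N) (h2 : subnormalIn N K) : subnormalIn H K := by
  obtain ⟨n, f, hf0, hfl, hfc⟩ := h2
  refine ⟨n + 1, Fin.cons H f, Fin.cons_zero _ _, ?_, ?_⟩
  · rw [← Fin.succ_last, Fin.cons_succ]; exact hfl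
  · intro i
    refine Fin.cases ?_ (fun j => ?_) i
    · rw [Fin.castSucc_zero, Fin.cons_zero, Fin.cons_succ, hf0]
      exact h1
    · rw [← Fin.succ_castSucc, Fin.cons_succ, Fin.cons_succ]
      exact hfc j

/-- Append a normal step to a subnormal chain. -/
theorem subnormalIn_snoc {G : Type*} [Group G] {H K L : Subgroup G}
    (h1 : subnormalIn H K) (h2 : normalIn K L) : subnormalIn H L := by
  obtain ⟨n, f, hf0, hfl, hfc⟩ := h1
  refine ⟨n + 1, Fin.snoc f L, ?_, ?_, ?_⟩
  · rw [← Fin.castSucc_zero, Fin.snoc_castSucc]; exact hf0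
  · exact Fin.snoc_last _ _
  · intro i
    refine Fin.lastCases ?_ (fun j => ?_) i
    · rw [Fin.snoc_castSucc, hfl, Fin.succ_last, Fin.snoc_last]
      exact h2
    · rw [Fin.snoc_castSucc, Fin.succ_castSucc, Fin.snoc_castSucc]
      exact hfc j

theorem normalIn_inf {G : Type*} [Group G] {A B : Subgroup G} (M : Subgroup G)
    (h : normalIn A B) : normalIn (A ⊓ M) (B ⊓ M) := by
  refine ⟨inf_le_inf_right M h.1, ?_⟩
  rintro k ⟨hkB, hkM⟩ a ⟨haA, haM⟩
  exact ⟨h.2 k hkB a haA, M.mul_mem (M.mul_mem hkM haM) (M.inv_mem hkM)⟩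

/-- A subnormal chain intersects down to an intermediate subgroup. -/
theorem subnormalIn_inf {G : Type*} [Group G] {H K M : Subgroup G}
    (h : subnormalIn H K) (hHM : H ≤ M) : subnormalIn H (K ⊓ M) := by
  obtain ⟨n, f, hf0, hfl, hfc⟩ := h
  refine ⟨n, fun i => f i ⊓ M, ?_, ?_, fun i => normalIn_inf M (hfc i)⟩
  · show f 0 ⊓ M = H
    rw [hf0, inf_eq_left.2 hHM]
  · show f (Fin.last n) ⊓ M = K ⊓ M
    rw [hfl]

theorem normalIn_map {G H : Type*} [Group G] [Group H] (φ : G →* H) {A B : Subgroup G}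
    (h : normalIn A B) : normalIn (A.map φ) (B.map φ) := by
  refine ⟨Subgroup.map_mono h.1, ?_⟩
  rintro k ⟨b, hb, rfl⟩ a ⟨a', ha', rfl⟩
  exact ⟨b * a' * b⁻¹, h.2 b hb a' ha', by simp [mul_assoc]⟩

theorem subnormalIn_map {G H : Type*} [Group G] [Group H] (φ : G →* H) {A B : Subgroup G}
    (h : subnormalIn A B) : subnormalIn (A.map φ) (B.map φ) := by
  obtain ⟨n, f, hf0, hfl, hfc⟩ := h
  exact ⟨n, fun i => (f i).map φ, by show (f 0).map φ = A.map φ; rw [hf0],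
    by show (f (Fin.last n)).map φ = B.map φ; rw [hfl],
    fun i => normalIn_map φ (hfc i)⟩

/-- In a finite group satisfying the normalizer condition, every subgroup is subnormal in `⊤`. -/
theorem subnormalIn_top_of_normalizerCondition {P : Type*} [Group P] [Finite P]
    (hnc : NormalizerCondition P) (H : Subgroup P) : subnormalIn H (⊤ : Subgroup P) := by
  have key : ∀ k : ℕ, ∀ H : Subgroup P, Nat.card P - Nat.card H ≤ k →
      subnormalIn H (⊤ : Subgroup P) := by
    intro k
    induction k with
    | zero =>
      intro H hk
      have hcard : Nat.card P ≤ Nat.card H := by omega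
      have : H = ⊤ := by
        rw [← Subgroup.coe_eq_univ]
        apply Set.eq_of_subset_of_ncard_le (Set.subset_univ _)
        rw [Set.ncard_univ, ← Nat.card_coe_set_eq]
        exact_mod_cast hcard
      rw [this]; exact subnormalIn_refl _
    | succ k ih =>
      intro H hk
      by_cases htop : H = ⊤
      · rw [htop]; exact subnormalIn_refl _
      · have hlt : H < (Subgroup.normalizer (H : Set P)) := hnc H (lt_top_iff_ne_top.2 htop)
        have hnorm : normalIn H (Subgroup.normalizer (H : Set P)) := by
          refine ⟨le_of_lt hlt, ?_⟩
          intro n hn h hh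
          exact ((Subgroup.mem_normalizer_iff.mp hn) h).mp hh
        have hcard : Nat.card H < Nat.card (Subgroup.normalizer (H : Set P)) := by
          have h' : Nat.card ((H : Set P)) < Nat.card (((Subgroup.normalizer (H : Set P)) : Set P)) := by
            rw [Nat.card_coe_set_eq, Nat.card_coe_set_eq]
            exact Set.ncard_lt_ncard (by exact_mod_cast hlt) (Set.toFinite _)
          exact h'
        have : Nat.card P - Nat.card (Subgroup.normalizer (H : Set P)) ≤ k := by
          have := Subgroup.card_le_card_group (G := P) (Subgroup.normalizer (H : Set P))
          omega
        exact subnormalIn_cons hnorm (ih (Subgroup.normalizer (H : Set P)) this)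
  exact key _ H le_rfl

/-- Every subgroup of a finite `p`-group (inside an ambient group) is subnormal in it. -/
theorem subnormalIn_of_isPGroup {G : Type*} [Group G] [Finite G] {p : ℕ} (hp : p.Prime)
    {H K : Subgroup G} (hQ : IsPGroup p ↥K) (hHK : H ≤ K) : subnormalIn H K := by
  haveI : Fact p.Prime := ⟨hp⟩
  have hnil : Group.IsNilpotent ↥K := hQ.isNilpotent
  have hnc : NormalizerCondition ↥K := normalizerCondition_of_isNilpotent
  have h := subnormalIn_top_of_normalizerCondition hnc (H.subgroupOf K)
  have h2 := subnormalIn_map K.subtype h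
  have e1 : (H.subgroupOf K).map K.subtype = H := by
    rw [Subgroup.subgroupOf_map_subtype, inf_eq_left.2 hHK]
  have e2 : (⊤ : Subgroup ↥K).map K.subtype = K := by
    rw [← MonoidHom.range_eq_map, Subgroup.range_subtype]
  rwa [e1, e2] at h2

theorem stmt_1 {G : Type*} [Group G] [Finite G] (p : ℕ) (hp : p.Prime) (x : G)
    (hx : ∃ n : ℕ, orderOf x = p ^ n) (Q : Subgroup G) (hQ : IsPGroup p ↥Q)
    (hxQ : x ∈ Q) :
    Subgroup.normalizer (Q : Set G) ≤ SubG x := by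
  intro y hy
  apply Subgroup.subset_closure
  show subnormalIn (Subgroup.zpowers x) (Subgroup.closure {x, y})
  set L : Subgroup G := Q ⊔ Subgroup.zpowers y with hL
  have hLnorm : L ≤ Subgroup.normalizer (Q : Set G) := by
    refine sup_le Subgroup.le_normalizer ?_
    rw [Subgroup.zpowers_le]; exact hy
  have hQL : normalIn Q L := by
    refine ⟨le_sup_left, ?_⟩
    intro k hk h hh
    exact ((Subgroup.mem_normalizer_iff.mp (hLnorm hk)) h).mp hh
  have hxsub : subnormalIn (Subgroup.zpowers x) Q :=
    subnormalIn_of_isPGroup hp hQ ((Subgroup.zpowers_le).2 hxQ)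
  have hsubL : subnormalIn (Subgroup.zpowers x) L := subnormalIn_snoc hxsub hQL
  have hML : Subgroup.closure {x, y} ≤ L := by
    rw [Subgroup.closure_le]
    rintro z (rfl | rfl)
    · exact le_sup_left (α := Subgroup G) hxQ
    · exact le_sup_right (α := Subgroup G) (Subgroup.mem_zpowers _)
  have hxM : Subgroup.zpowers x ≤ Subgroup.closure {x, y} :=
    (Subgroup.zpowers_le).2 (Subgroup.subset_closure (Set.mem_insert _ _))
  have := subnormalIn_inf hsubL hxM
  rwa [inf_eq_right.2 hML] at this
end

section
/- Let G be a finite group with a normal p-complement N (i.e., N ⊴ G, p does not divide |N|, and G/N is a p-group), let x ∈ G be a p-element and let P be a Sylow p-subgroup of G containing x. Then Sub_G(x) = ⟨P, C_N(x)⟩. -/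
open Subgroup Pointwise

section Aux

/-- An element of a subgroup of order coprime to `p` killed by `p ^ k` is trivial. -/
lemma elt_eq_one_aux {p : ℕ} (hp : p.Prime) {G : Type*} [Group G] {N : Subgroup G}
    (hN' : ¬ p ∣ Nat.card N) {c : G} (hc : c ∈ N) {k : ℕ} (hck : c ^ p ^ k = 1) : c = 1 := by
  have h1 : orderOf c ∣ p ^ k := orderOf_dvd_of_pow_eq_one hck
  have h2 : orderOf c ∣ Nat.card N := Subgroup.orderOf_dvd_natCard N hc
  have hco : Nat.Coprime (p ^ k) (Nat.card N) :=
    Nat.Coprime.pow_left _ (hp.coprime_iff_not_dvd.mpr hN')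
  have := Nat.dvd_gcd h1 h2
  rw [Nat.Coprime.gcd_eq_one hco] at this
  exact orderOf_eq_one_iff.mp (Nat.dvd_one.mp this)

lemma pgroup_inf_coprime_eq_bot {G : Type*} [Group G] {p : ℕ} (hp : p.Prime)
    {Q N : Subgroup G} (hQ : IsPGroup p Q) (hN' : ¬ p ∣ Nat.card N) : Q ⊓ N = ⊥ := by
  rw [eq_bot_iff]
  rintro g ⟨hgQ, hgN⟩
  obtain ⟨k, hk⟩ := hQ ⟨g, hgQ⟩
  have hk' : g ^ p ^ k = 1 := by
    have := congrArg (Subgroup.subtype Q) hk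
    simpa using this
  simpa [Subgroup.mem_bot] using elt_eq_one_aux hp hN' hgN hk'

/-- In a group with a normal `p`-complement, a Sylow `p`-subgroup is a complement. -/
lemma sylow_sup_normal_eq_top {K : Type*} [Group K] [Finite K] {p : ℕ} (hp : p.Prime)
    (N : Subgroup K) [hN : N.Normal] (hN' : ¬ p ∣ Nat.card N) (hq : IsPGroup p (K ⧸ N))
    (Q : Sylow p K) : (Q : Subgroup K) ⊔ N = ⊤ := by
  haveI : Fact p.Prime := ⟨hp⟩
  obtain ⟨t, ht⟩ := IsPGroup.iff_card.mp hq
  have hcard : Nat.card K = p ^ t * Nat.card N := by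
    rw [← ht]; exact Subgroup.card_eq_card_quotient_mul_card_subgroup N
  have hNpos : Nat.card N ≠ 0 := Nat.card_pos.ne'
  have hQcard : Nat.card Q = p ^ t := by
    rw [Sylow.card_eq_multiplicity]
    congr 1
    rw [hcard, Nat.factorization_mul (pow_ne_zero t hp.pos.ne') hNpos]
    simp [hp.factorization_pow, Nat.factorization_eq_zero_of_not_dvd hN']
  have hco : Nat.Coprime (Nat.card Q) (Nat.card N) := by
    rw [hQcard]; exact Nat.Coprime.pow_left _ (hp.coprime_iff_not_dvd.mpr hN')
  have h1 : Nat.card Q ∣ Nat.card ↥((Q : Subgroup K) ⊔ N) :=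
    Subgroup.card_dvd_of_le le_sup_left
  have h2 : Nat.card N ∣ Nat.card ↥((Q : Subgroup K) ⊔ N) :=
    Subgroup.card_dvd_of_le le_sup_right
  have h3 : Nat.card Q * Nat.card N ∣ Nat.card ↥((Q : Subgroup K) ⊔ N) :=
    hco.mul_dvd_of_dvd_of_dvd h1 h2
  have h4 : Nat.card ↥((Q : Subgroup K) ⊔ N) ∣ Nat.card K :=
    Subgroup.card_subgroup_dvd_card _
  have h5 : Nat.card K = Nat.card Q * Nat.card N := by rw [hQcard, hcard]
  exact Subgroup.eq_top_of_card_eq _ (Nat.dvd_antisymm h4 (h5 ▸ h3))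

/-- Any Sylow `p`-subgroup containing `x` is contained in `P ⊔ (N ⊓ C(x))`. -/
lemma sylow_conj_le_sup {G : Type*} [Group G] [Finite G] {p : ℕ} (hp : p.Prime)
    (N : Subgroup G) [hN : N.Normal] (hN' : ¬ p ∣ Nat.card N) (hq : IsPGroup p (G ⧸ N))
    {x : G} (P P₁ : Sylow p G) (hxP : x ∈ P) (hxP₁ : x ∈ P₁) :
    (P₁ : Subgroup G) ≤ (P : Subgroup G) ⊔ (N ⊓ Subgroup.centralizer {x}) := by
  haveI : Fact p.Prime := ⟨hp⟩
  obtain ⟨g, hg⟩ := MulAction.exists_smul_eq G P P₁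
  have htop : N ⊔ (P : Subgroup G) = ⊤ := by
    rw [sup_comm]; exact sylow_sup_normal_eq_top hp N hN' hq P
  have hg' : g ∈ (↑(N ⊔ (P : Subgroup G)) : Set G) := by rw [htop]; trivial
  rw [Subgroup.normal_mul] at hg'
  obtain ⟨n, hn, a, ha, rfl⟩ := hg'
  replace hn : n ∈ N := hn
  replace ha : a ∈ (P : Subgroup G) := ha
  have haP : a • P = P := Sylow.smul_eq_iff_mem_normalizer.mpr (Subgroup.le_normalizer ha)
  have hgP : n • P = P₁ := by rw [← hg, mul_smul, haP]
  -- x ∈ P₁ = n • P, so n⁻¹ * x * n ∈ P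
  have hx' : n⁻¹ * x * n ∈ (P : Subgroup G) := by
    rw [← hgP] at hxP₁
    have : x ∈ MulAut.conj n • (P : Subgroup G) := by
      rwa [← Sylow.coe_subgroup_smul]
    rw [Subgroup.mem_pointwise_smul_iff_inv_smul_mem] at this
    simpa [MulAut.conj] using this
  have hdiff : x⁻¹ * (n⁻¹ * x * n) ∈ N := by
    have h1 : x⁻¹ * n⁻¹ * x⁻¹⁻¹ ∈ N := by
      have := hN.conj_mem n⁻¹ (N.inv_mem hn) x⁻¹
      simpa using this
    rw [inv_inv] at h1
    have := mul_mem h1 hn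
    simpa [mul_assoc] using this
  have hmem : x⁻¹ * (n⁻¹ * x * n) ∈ (P : Subgroup G) ⊓ N :=
    ⟨mul_mem ((P : Subgroup G).inv_mem hxP) hx', hdiff⟩
  rw [pgroup_inf_coprime_eq_bot hp P.2 hN'] at hmem
  have hnx : n⁻¹ * x * n = x := by
    have h1 : x⁻¹ * (n⁻¹ * x * n) = 1 := Subgroup.mem_bot.mp hmem
    have := congrArg (x * ·) h1
    simpa [mul_assoc] using this
  have hncent : n ∈ Subgroup.centralizer {x} := by
    rw [Subgroup.mem_centralizer_iff]
    intro h hh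
    rw [Set.mem_singleton_iff] at hh
    subst hh
    have := congrArg (n * ·) hnx
    simpa [mul_assoc] using this
  intro q hq'
  rw [← hgP] at hq'
  have : q ∈ MulAut.conj n • (P : Subgroup G) := by rwa [← Sylow.coe_subgroup_smul]
  rw [Subgroup.mem_smul_pointwise_iff_exists] at this
  obtain ⟨s, hs, rfl⟩ := this
  have hnmem : n ∈ (P : Subgroup G) ⊔ (N ⊓ Subgroup.centralizer {x}) :=
    Subgroup.mem_sup_right ⟨hn, hncent⟩
  have hsmem : s ∈ (P : Subgroup G) ⊔ (N ⊓ Subgroup.centralizer {x}) :=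
    Subgroup.mem_sup_left hs
  simpa [MulAut.conj] using mul_mem (mul_mem hnmem hsmem) (inv_mem hnmem)

lemma card_lt_of_lt_subgroup {M : Type*} [Group M] [Finite M] {A B : Subgroup M}
    (h : A < B) : Nat.card A < Nat.card B := by
  have hs : (A : Set M) ⊂ (B : Set M) := by
    rw [Set.ssubset_iff_of_subset (SetLike.coe_subset_coe.mpr h.le)]
    obtain ⟨z, hzB, hzA⟩ := SetLike.exists_of_lt h
    exact ⟨z, hzB, hzA⟩
  have := Set.ncard_lt_ncard hs (Set.toFinite _)
  rw [← Nat.card_coe_set_eq, ← Nat.card_coe_set_eq] at this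
  exact this

/-- Every subgroup of a finite `p`-group is subnormal. -/
lemma subnormalIn_of_pgroup {G : Type*} [Group G] [Finite G] {p : ℕ} (hp : p.Prime)
    {H K : Subgroup G} (hHK : H ≤ K) (hK : IsPGroup p K) : subnormalIn H K := by
  haveI : Fact p.Prime := ⟨hp⟩
  haveI : Group.IsNilpotent ↥K := hK.isNilpotent
  have hnc : NormalizerCondition ↥K := normalizerCondition_of_isNilpotent
  set n : ℕ := Nat.card ↥K with hn
  -- the normalizer chain inside ↥K
  let g : ℕ → Subgroup ↥K := fun k => Nat.rec (H.subgroupOf K) (fun _ L => Subgroup.normalizer (L : Set ↥K)) k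
  have hg0 : g 0 = H.subgroupOf K := rfl
  have hgsucc : ∀ k : ℕ, g (k + 1) = Subgroup.normalizer (SetLike.coe (g k) : Set ↥K) := fun k => rfl
  have hstab : ∀ k, g k = ⊤ → g (k + 1) = ⊤ := by
    intro k hk
    rw [hgsucc, hk]
    exact top_le_iff.mp (le_normalizer)
  have hgrow : ∀ k, g k ≠ ⊤ → Nat.card ↥(g k) < Nat.card ↥(g (k + 1)) := by
    intro k hk
    have : g k < Subgroup.normalizer (SetLike.coe (g k) : Set ↥K) := hnc _ (lt_top_iff_ne_top.mpr hk)
    rw [← hgsucc] at this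
    exact card_lt_of_lt_subgroup this
  -- the chain reaches ⊤ after at most n steps
  have hrun : ∀ k, g k = ⊤ ∨ k + 1 ≤ Nat.card ↥(g k) := by
    intro k
    induction k with
    | zero =>
      right
      rw [hg0]
      have : 0 < Nat.card ↥(H.subgroupOf K) := Nat.card_pos
      omega
    | succ k ih =>
      rcases eq_or_ne (g k) ⊤ with h2 | h2
      · left; exact hstab k h2
      · rcases ih with h | h
        · exact absurd h h2
        · right; exact Nat.succ_le_of_lt (lt_of_le_of_lt h (hgrow k h2))
  have htop : g n = ⊤ := by
    rcases hrun n with h | h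
    · exact h
    · exfalso
      have hle : Nat.card ↥(g n) ≤ n := by
        rw [hn]
        have : SetLike.coe (g n) ⊆ Set.univ := Set.subset_univ _
        have h2 := Set.ncard_le_ncard this (Set.toFinite _)
        rw [← Nat.card_coe_set_eq, Set.ncard_univ] at h2
        exact h2
      omega
  -- build the chain in G
  refine ⟨n, fun i => (g i).map K.subtype, ?_, ?_, ?_⟩
  · show (g 0).map K.subtype = H
    rw [hg0, Subgroup.subgroupOf_map_subtype, inf_eq_left.mpr hHK]
  · show (g n).map K.subtype = K
    rw [htop, ← MonoidHom.range_eq_map, Subgroup.range_subtype]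
  · intro i
    constructor
    · have : g i ≤ g (i + 1) := by rw [hgsucc]; exact le_normalizer
      have := Subgroup.map_mono (f := K.subtype) this
      simpa [Fin.coe_castSucc, Fin.val_succ] using this
    · rintro z hz h hh
      simp only [Fin.val_succ, Subgroup.mem_map, Fin.coe_castSucc] at hz hh ⊢
      obtain ⟨z', hz', rfl⟩ := hz
      obtain ⟨h', hh', rfl⟩ := hh
      refine ⟨z' * h' * z'⁻¹, ?_, by simp⟩
      rw [hgsucc] at hz'
      exact (Subgroup.mem_normalizer_iff.mp hz' h').mp hh'

/-- If `⟨x⟩` is subnormal in `K`, then `x` centralizes `K ⊓ N`. -/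
lemma cent_of_subnormal {G : Type*} [Group G] [Finite G] {p k : ℕ} (hp : p.Prime)
    {N : Subgroup G} (hN : N.Normal) (hN' : ¬ p ∣ Nat.card N)
    {x : G} (hxo : orderOf x = p ^ k) {K : Subgroup G}
    (h : subnormalIn (Subgroup.zpowers x) K) :
    ∀ m, m ∈ K → m ∈ N → x * m = m * x := by
  obtain ⟨n, f, hf0, hfl, hstep⟩ := h
  suffices H : ∀ i : Fin (n + 1), x ∈ f i ∧ ∀ m, m ∈ f i → m ∈ N → x * m = m * x by
    intro m hm hmN
    exact (H (Fin.last n)).2 m (by rwa [hfl]) hmN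
  intro i
  induction i using Fin.induction with
  | zero =>
    rw [hf0]
    refine ⟨Subgroup.mem_zpowers x, ?_⟩
    rintro m hm _
    obtain ⟨j, rfl⟩ := hm
    exact ((Commute.refl x).zpow_right j).eq
  | succ i ih =>
    obtain ⟨hle, hconj⟩ := hstep i
    obtain ⟨hxL, hcen⟩ := ih
    refine ⟨hle hxL, ?_⟩
    intro m hm hmN
    have h1 : m⁻¹ * x * m⁻¹⁻¹ ∈ f i.castSucc := hconj m⁻¹ (inv_mem hm) x hxL
    rw [inv_inv] at h1
    set c := x⁻¹ * (m⁻¹ * x * m) with hc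
    have hcL : c ∈ f i.castSucc := mul_mem (inv_mem hxL) h1
    have hcN : c ∈ N := by
      have h2 : x⁻¹ * m⁻¹ * x⁻¹⁻¹ ∈ N := hN.conj_mem m⁻¹ (inv_mem hmN) x⁻¹
      rw [inv_inv] at h2
      have := mul_mem h2 hmN
      simpa [hc, mul_assoc] using this
    have hcx : x * c = c * x := hcen c hcL hcN
    have hxceq : x * c = m⁻¹ * x * m := by
      rw [hc]
      group
    have hxc_pow : (x * c) ^ p ^ k = 1 := by
      rw [hxceq]
      have h3 : (m⁻¹ * x * m⁻¹⁻¹) ^ p ^ k = m⁻¹ * x ^ p ^ k * m⁻¹⁻¹ := conj_pow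
      rw [inv_inv] at h3
      rw [h3, ← hxo, pow_orderOf_eq_one]
      group
    have hcpow : c ^ p ^ k = 1 := by
      have h4 : (x * c) ^ p ^ k = x ^ p ^ k * c ^ p ^ k := Commute.mul_pow hcx _
      have hx1 : x ^ p ^ k = 1 := by rw [← hxo]; exact pow_orderOf_eq_one x
      rw [h4, hx1, one_mul] at hxc_pow
      exact hxc_pow
    have hc1 : c = 1 := elt_eq_one_aux hp hN' hcN hcpow
    have hmx : m⁻¹ * x * m = x := by rw [← hxceq, hc1, mul_one]
    calc x * m = m * (m⁻¹ * x * m) := by group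
    _ = m * x := by rw [hmx]

end Aux

theorem stmt_5 {G : Type*} [Group G] [Finite G] (p : ℕ) (hp : p.Prime)
    (N : Subgroup G) (hN : N.Normal) (hN' : ¬ p ∣ Nat.card N)
    (hquot : IsPGroup p (G ⧸ N))
    (x : G) (hx : ∃ n : ℕ, orderOf x = p ^ n)
    (P : Sylow p G) (hxP : x ∈ P) :
    SubG x = (P : Subgroup G) ⊔ (N ⊓ Subgroup.centralizer {x}) := by
  haveI : Fact p.Prime := ⟨hp⟩
  haveI := hN
  obtain ⟨k, hxo⟩ := hx
  apply le_antisymm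
  · -- SubG x ≤ P ⊔ (N ⊓ C(x))
    rw [SubG, Subgroup.closure_le]
    intro y hy
    have hsub : subnormalIn (Subgroup.zpowers x) (Subgroup.closure {x, y}) := hy
    set H := Subgroup.closure ({x, y} : Set G) with hH
    have hxH : x ∈ H := Subgroup.subset_closure (Or.inl rfl)
    have hyH : y ∈ H := Subgroup.subset_closure (Or.inr rfl)
    have hcent : ∀ m, m ∈ H → m ∈ N → x * m = m * x :=
      cent_of_subnormal hp hN hN' hxo hsub
    -- work inside H
    set N' : Subgroup ↥H := N.subgroupOf H with hN'def
    have hcardN' : ¬ p ∣ Nat.card N' := by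
      intro hdvd
      apply hN'
      have heq : N' = (N ⊓ H).subgroupOf H := by
        ext z
        simp [hN'def, Subgroup.mem_subgroupOf, z.2]
      have e := Subgroup.subgroupOfEquivOfLe (inf_le_right : N ⊓ H ≤ H)
      have hcard : Nat.card N' = Nat.card ↥(N ⊓ H) := by
        rw [heq]; exact Nat.card_congr e.toEquiv
      have hdvd2 : Nat.card ↥(N ⊓ H) ∣ Nat.card N :=
        Subgroup.card_dvd_of_le inf_le_left
      exact dvd_trans (hcard ▸ hdvd) hdvd2
    have hquot' : IsPGroup p (↥H ⧸ N') := by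
      set f : ↥H →* G ⧸ N := (QuotientGroup.mk' N).comp H.subtype with hf
      have hker : f.ker = N' := by
        rw [hf, ← MonoidHom.comap_ker, QuotientGroup.ker_mk']
        rfl
      have hrange : IsPGroup p f.range := IsPGroup.to_subgroup hquot f.range
      have h2 : IsPGroup p (↥H ⧸ f.ker) :=
        hrange.of_equiv (QuotientGroup.quotientKerEquivRange f).symm
      exact h2.of_equiv (QuotientGroup.quotientMulEquivOfEq hker)
    -- a Sylow subgroup of H containing x
    set x' : ↥H := ⟨x, hxH⟩ with hx'def
    have hx'pow : x' ^ p ^ k = 1 := by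
      ext
      simp only [SubmonoidClass.coe_pow, OneMemClass.coe_one]
      rw [← hxo]
      exact pow_orderOf_eq_one x
    obtain ⟨j, hjk, hj⟩ := (Nat.dvd_prime_pow hp).mp (orderOf_dvd_of_pow_eq_one hx'pow)
    have hxz : IsPGroup p ↥(Subgroup.zpowers x') :=
      IsPGroup.iff_card.mpr ⟨j, by rw [Nat.card_zpowers, hj]⟩
    obtain ⟨Q', hQ'⟩ := hxz.exists_le_sylow
    have hx'Q' : x' ∈ Q' := hQ' (Subgroup.mem_zpowers x')
    have hsup : (Q' : Subgroup ↥H) ⊔ N' = ⊤ := sylow_sup_normal_eq_top hp N' hcardN' hquot' Q'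
    set y' : ↥H := ⟨y, hyH⟩ with hy'def
    have hy'mem : y' ∈ (↑((Q' : Subgroup ↥H) ⊔ N') : Set ↥H) := by rw [hsup]; trivial
    rw [Subgroup.mul_normal] at hy'mem
    obtain ⟨q', hq', n', hn', hqn⟩ := hy'mem
    -- the p-part
    have hmapP : IsPGroup p ((Q' : Subgroup ↥H).map H.subtype) := Q'.2.map H.subtype
    obtain ⟨P₁, hP₁⟩ := hmapP.exists_le_sylow
    have hxP₁ : x ∈ P₁ := hP₁ ⟨x', hx'Q', rfl⟩
    have hqP₁ : (q' : G) ∈ P₁ := hP₁ ⟨q', hq', rfl⟩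
    have hqmem : (q' : G) ∈ (P : Subgroup G) ⊔ (N ⊓ Subgroup.centralizer {x}) :=
      sylow_conj_le_sup hp N hN' hquot P P₁ hxP hxP₁ hqP₁
    -- the p'-part
    have hn'N : (n' : G) ∈ N := hn'
    have hn'H : (n' : G) ∈ H := n'.2
    have hn'cent : (n' : G) ∈ Subgroup.centralizer {x} := by
      rw [Subgroup.mem_centralizer_iff]
      rintro g rfl
      exact hcent _ hn'H hn'N
    have hnmem : (n' : G) ∈ (P : Subgroup G) ⊔ (N ⊓ Subgroup.centralizer {x}) :=
      Subgroup.mem_sup_right ⟨hn'N, hn'cent⟩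
    have hyeq : y = (q' : G) * (n' : G) := by
      have := congrArg (Subtype.val : ↥H → G) hqn
      simpa using this.symm
    rw [hyeq]
    exact mul_mem hqmem hnmem
  · -- P ⊔ (N ⊓ C(x)) ≤ SubG x
    apply sup_le
    · intro y hy
      apply Subgroup.subset_closure
      show subnormalIn (Subgroup.zpowers x) (Subgroup.closure {x, y})
      have hclos : Subgroup.closure ({x, y} : Set G) ≤ (P : Subgroup G) := by
        rw [Subgroup.closure_le]
        rintro z (rfl | rfl)
        · exact hxP
        · exact hy
      have hle : Subgroup.zpowers x ≤ Subgroup.closure ({x, y} : Set G) :=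
        Subgroup.zpowers_le.mpr (Subgroup.subset_closure (Or.inl rfl))
      exact subnormalIn_of_pgroup hp hle (IsPGroup.to_le P.2 hclos)
    · rintro c ⟨hcN, hcC⟩
      apply Subgroup.subset_closure
      show subnormalIn (Subgroup.zpowers x) (Subgroup.closure {x, c})
      have hcc : Subgroup.closure ({x, c} : Set G) ≤ Subgroup.centralizer {x} := by
        rw [Subgroup.closure_le]
        rintro z (rfl | rfl)
        · exact Subgroup.mem_centralizer_iff.mpr (by rintro g rfl; rfl)
        · exact hcC
      refine ⟨1, ![Subgroup.zpowers x, Subgroup.closure {x, c}], by simp, by simp [Fin.last], ?_⟩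
      intro i
      fin_cases i
      constructor
      · simp only [Fin.castSucc, Fin.succ]
        exact Subgroup.zpowers_le.mpr (Subgroup.subset_closure (Or.inl rfl))
      · intro z hz h hh
        simp only [Fin.castSucc, Fin.succ] at hz hh ⊢
        obtain ⟨j, rfl⟩ := hh
        have hzx : x * z = z * x := Subgroup.mem_centralizer_iff.mp (hcc hz) x rfl
        have hcomm : Commute z (x ^ j) := (Commute.symm hzx).zpow_right j
        have heq : z * x ^ j * z⁻¹ = x ^ j := by rw [hcomm.eq]; group
        exact ⟨j, heq.symm⟩
end

section
/- Let G be a finite group with normal p-complement N, let x ∈ G be a p-element, let P ∈ Syl_p(G) contain x, and write S = Sub_G(x). Then N ∩ S equals the normal closure of C_N(x) in S, this is a normal p-complement of S, and S = C_N(x)^S · P. -/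
/-- The normal closure of `C_N(x)` in `Sub_G(x)`: the subgroup generated by all
`Sub_G(x)`-conjugates of `C_N(x)`. -/
def CNclosure {G : Type*} [Group G] (N : Subgroup G) (x : G) : Subgroup G :=
  Subgroup.closure
    {g | ∃ s ∈ SubG x, ∃ c ∈ N ⊓ Subgroup.centralizer {x}, g = s * c * s⁻¹}

section Aux

open Subgroup

variable {G : Type*} [Group G]

lemma aux_subn_refl (H : Subgroup G) : subnormalIn H H :=
  ⟨0, fun _ => H, rfl, rfl, fun i => i.elim0⟩

lemma aux_le_normalizer_of_conj {A K : Subgroup G}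
    (h : ∀ a ∈ A, ∀ z ∈ K, a * z * a⁻¹ ∈ K) : A ≤ Subgroup.normalizer (K : Set G) := by
  intro a ha
  rw [Subgroup.mem_normalizer_iff]
  intro z
  refine ⟨fun hz => h a ha z hz, fun hz => ?_⟩
  have := h a⁻¹ (inv_mem ha) _ hz
  simpa [mul_assoc] using this

lemma aux_normalIn_of_le_normalizer {H K : Subgroup G} (h1 : H ≤ K)
    (h2 : K ≤ Subgroup.normalizer (H : Set G)) : normalIn H K :=
  ⟨h1, fun k hk h hh => (Subgroup.mem_normalizer_iff.mp (h2 hk) h).mp hh⟩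

lemma aux_subn_cons {H K T : Subgroup G} (h1 : normalIn H K) (h2 : subnormalIn K T) :
    subnormalIn H T := by
  obtain ⟨n, f, hf0, hfl, hstep⟩ := h2
  refine ⟨n + 1, Fin.cons H f, Fin.cons_zero _ _, ?_, ?_⟩
  · rw [show Fin.last (n + 1) = Fin.succ (Fin.last n) from rfl, Fin.cons_succ]
    exact hfl
  · intro i
    induction i using Fin.cases with
    | zero =>
      simpa [Fin.castSucc_zero, Fin.cons_zero, Fin.cons_succ, hf0] using h1
    | succ j =>
      simpa [← Fin.succ_castSucc, Fin.cons_succ] using hstep j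

lemma aux_subn_map {G' : Type*} [Group G'] (f : G →* G') {H K : Subgroup G}
    (h : subnormalIn H K) : subnormalIn (H.map f) (K.map f) := by
  obtain ⟨n, c, h0, hl, hstep⟩ := h
  refine ⟨n, fun i => (c i).map f, by simp only [h0], by simp only [hl], fun i => ?_⟩
  obtain ⟨hle, hconj⟩ := hstep i
  refine ⟨Subgroup.map_mono hle, ?_⟩
  rintro k hk h' hh'
  simp only [Subgroup.mem_map] at hk hh' ⊢
  obtain ⟨a, ha, rfl⟩ := hk
  obtain ⟨b, hb, rfl⟩ := hh'
  exact ⟨a * b * a⁻¹, hconj a ha b hb, by simp⟩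

end Aux
section Aux2

open Subgroup

variable {G : Type*} [Group G]

lemma aux_subn_of_le {A K T : Subgroup G} (h : subnormalIn A T) (hAK : A ≤ K) (hKT : K ≤ T) :
    subnormalIn A K := by
  obtain ⟨n, f, hf0, hfl, hstep⟩ := h
  refine ⟨n, fun i => f i ⊓ K, by simp only [hf0]; exact inf_eq_left.mpr hAK,
    by simp only [hfl]; exact inf_eq_right.mpr hKT, fun i => ?_⟩
  obtain ⟨hle, hconj⟩ := hstep i
  constructor
  · exact inf_le_inf_right K hle
  · intro k hk h hh
    rw [Subgroup.mem_inf] at hk hh ⊢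
    exact ⟨hconj k hk.1 h hh.1, mul_mem (mul_mem hk.2 hh.2) (inv_mem hk.2)⟩

lemma aux_pgroup_subn_top {p : ℕ} [Fact p.Prime] {Γ : Type*} [Group Γ] [Finite Γ]
    (hΓ : IsPGroup p Γ) (H : Subgroup Γ) : subnormalIn H ⊤ := by
  haveI : Group.IsNilpotent Γ := hΓ.isNilpotent
  have nc : NormalizerCondition Γ := normalizerCondition_of_isNilpotent
  have key : ∀ m : ℕ, ∀ H : Subgroup Γ, Nat.card Γ - Nat.card H ≤ m → subnormalIn H ⊤ := by
    intro m
    induction m with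
    | zero =>
      intro H hH
      have hcard : Nat.card Γ ≤ Nat.card H := Nat.le_of_sub_eq_zero (Nat.le_zero.mp hH)
      have : H = ⊤ := by
        have h1 : Nat.card H ≤ Nat.card Γ := Nat.card_le_card_of_injective _ Subtype.val_injective
        exact Subgroup.eq_top_of_card_eq H (le_antisymm h1 hcard)
      rw [this]; exact aux_subn_refl ⊤
    | succ m ih =>
      intro H hH
      by_cases htop : H = ⊤
      · rw [htop]; exact aux_subn_refl ⊤
      · have hlt : H < ⊤ := lt_top_iff_ne_top.mpr htop
        have h2 : H < Subgroup.normalizer (H : Set Γ) := nc H hlt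
        have hcardlt : Nat.card H < Nat.card (Subgroup.normalizer (H : Set Γ)) := by
          have : (H : Set Γ) ⊂ (Subgroup.normalizer (H : Set Γ) : Set Γ) := by
            exact Set.ssubset_iff_subset_ne.mpr ⟨h2.le, by
              intro hcontra
              exact h2.ne (SetLike.coe_injective hcontra)⟩
          have := Set.ncard_lt_ncard this (Set.toFinite _)
          rw [← Nat.card_coe_set_eq, ← Nat.card_coe_set_eq] at this; exact this
        have hmeas : Nat.card Γ - Nat.card (Subgroup.normalizer (H : Set Γ)) ≤ m := by omega
        exact aux_subn_cons
          (aux_normalIn_of_le_normalizer Subgroup.le_normalizer le_rfl)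
          (ih (Subgroup.normalizer (H : Set Γ)) hmeas)
  exact key (Nat.card Γ - Nat.card H) H le_rfl

lemma aux_pgroup_subnormalIn {p : ℕ} [Fact p.Prime] [Finite G] {A B : Subgroup G}
    (hB : IsPGroup p B) (hAB : A ≤ B) : subnormalIn A B := by
  have h0 := aux_pgroup_subn_top hB (A.subgroupOf B)
  have h2 := aux_subn_map B.subtype h0
  have e1 : (A.subgroupOf B).map B.subtype = A := by
    rw [Subgroup.subgroupOf_map_subtype, inf_eq_left.mpr hAB]
  have e2 : (⊤ : Subgroup B).map B.subtype = B := by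
    rw [← MonoidHom.range_eq_map, Subgroup.range_subtype]
  rwa [e1, e2] at h2

end Aux2
section Aux3

open Subgroup

variable {G : Type*} [Group G]

lemma aux_mem_normalizer_sup {A B : Subgroup G} {g : G} (ha : g ∈ Subgroup.normalizer (A : Set G))
    (hb : g ∈ Subgroup.normalizer (B : Set G)) : g ∈ Subgroup.normalizer ((A ⊔ B : Subgroup G) : Set G) := by
  have key : ∀ u : G, u ∈ Subgroup.normalizer (A : Set G) → u ∈ Subgroup.normalizer (B : Set G) →
      ∀ h ∈ A ⊔ B, u * h * u⁻¹ ∈ A ⊔ B := by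
    intro u hua hub h hh
    have hunion : A ⊔ B = Subgroup.closure ((A : Set G) ∪ (B : Set G)) := by
      rw [Subgroup.closure_union, Subgroup.closure_eq, Subgroup.closure_eq]
    rw [hunion] at hh ⊢
    induction hh using Subgroup.closure_induction with
    | mem z hz =>
      rcases hz with hz | hz
      · exact Subgroup.subset_closure (Or.inl ((Subgroup.mem_normalizer_iff.mp hua z).mp hz))
      · exact Subgroup.subset_closure (Or.inr ((Subgroup.mem_normalizer_iff.mp hub z).mp hz))
    | one => simpa using one_mem _
    | mul a b _ _ pa pb =>
      have : u * (a * b) * u⁻¹ = (u * a * u⁻¹) * (u * b * u⁻¹) := by group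
      rw [this]; exact mul_mem pa pb
    | inv a _ pa =>
      have : u * a⁻¹ * u⁻¹ = (u * a * u⁻¹)⁻¹ := by group
      rw [this]; exact inv_mem pa
  rw [Subgroup.mem_normalizer_iff]
  intro h
  refine ⟨fun hh => key g ha hb h hh, fun hh => ?_⟩
  have := key g⁻¹ (inv_mem ha) (inv_mem hb) _ hh
  simpa [mul_assoc] using this

lemma aux_pgroup_finset_sup {p : ℕ} {ι : Type*} (s : Finset ι) (f : ι → Subgroup G)
    (hpg : ∀ i, IsPGroup p (f i)) (hn : ∀ i j, f i ≤ Subgroup.normalizer ((f j) : Set G)) :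
    IsPGroup p (s.sup f : Subgroup G) ∧
      ∀ g : G, (∀ i, g ∈ Subgroup.normalizer ((f i) : Set G)) → g ∈ Subgroup.normalizer ((s.sup f : Subgroup G) : Set G) := by
  classical
  induction s using Finset.cons_induction with
  | empty =>
    constructor
    · rw [Finset.sup_empty]; exact IsPGroup.of_bot
    · intro g _
      rw [Finset.sup_empty, Subgroup.mem_normalizer_iff]
      simp
  | cons i s his ih =>
    obtain ⟨ih1, ih2⟩ := ih
    rw [Finset.sup_cons]
    constructor
    · refine IsPGroup.to_sup_of_normal_right' (hpg i) ih1 ?_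
      intro g hg
      exact ih2 g (fun j => hn i j hg)
    · intro g hg
      exact aux_mem_normalizer_sup (hg i) (ih2 g hg)

end Aux3
section Aux4

open Subgroup

variable {G : Type*} [Group G]

set_option maxHeartbeats 1000000 in
lemma aux_chain_pgroup {p : ℕ} [Finite G] {x : G} (hx : IsPGroup p (Subgroup.zpowers x)) :
    ∀ n : ℕ, ∀ f : Fin (n + 1) → Subgroup G, f 0 = Subgroup.zpowers x →
      (∀ i : Fin n, normalIn (f i.castSucc) (f i.succ)) →
      ∃ X : Subgroup G, x ∈ X ∧ IsPGroup p X ∧ normalIn X (f (Fin.last n)) := by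
  intro n
  induction n with
  | zero =>
    intro f h0 _
    refine ⟨Subgroup.zpowers x, Subgroup.mem_zpowers x, hx, ?_⟩
    rw [show (Fin.last 0) = 0 from rfl, h0]
    refine ⟨le_rfl, ?_⟩
    rintro k hk h hh
    obtain ⟨a, rfl⟩ := hk
    obtain ⟨b, rfl⟩ := hh
    have : (x ^ a) * (x ^ b) * (x ^ a)⁻¹ = x ^ b := by
      rw [← zpow_neg, ← zpow_add, ← zpow_add]
      congr 1
      ring
    rw [this]
    exact ⟨b, rfl⟩
  | succ n ih =>
    intro f h0 hstep
    obtain ⟨Y, hxY, hYp, hYn⟩ := ih (fun i => f i.castSucc)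
      (by exact h0)
      (fun i => by
        have := hstep i.castSucc
        simpa [← Fin.succ_castSucc] using this)
    have hYle : Y ≤ f ((Fin.last n).castSucc) := hYn.1
    have hlast : normalIn (f ((Fin.last n).castSucc)) (f (Fin.last (n + 1))) := by
      have := hstep (Fin.last n)
      rwa [Fin.succ_last] at this
    set H' := f ((Fin.last n).castSucc) with hH'def
    set H := f (Fin.last (n + 1)) with hHdef
    haveI : Fintype H := Fintype.ofFinite H
    classical
    set comp : H → Subgroup G := fun h => Y.map (MulAut.conj (h : G)).toMonoidHom with hcompdef
    have hcomple : ∀ h : H, comp h ≤ H' := by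
      intro h z hz
      obtain ⟨y, hy, rfl⟩ := Subgroup.mem_map.mp hz
      exact hlast.2 (h : G) h.2 y (hYle hy)
    have hcompn : ∀ h g : H, comp h ≤ Subgroup.normalizer ((comp g) : Set G) := by
      intro h g
      refine aux_le_normalizer_of_conj ?_
      intro a ha z hz
      obtain ⟨y, hy, rfl⟩ := Subgroup.mem_map.mp hz
      have haH' : a ∈ H' := hcomple h ha
      have hbH' : (g : G)⁻¹ * a * (g : G) ∈ H' := by
        have : ((g : G))⁻¹ ∈ H := inv_mem g.2
        have := hlast.2 _ this a haH'
        simpa [mul_assoc] using this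
      have hby : ((g : G)⁻¹ * a * (g : G)) * y * ((g : G)⁻¹ * a * (g : G))⁻¹ ∈ Y :=
        hYn.2 _ hbH' y hy
      refine Subgroup.mem_map.mpr ⟨_, hby, ?_⟩
      simp only [MulAut.conj_apply, MulEquiv.coe_toMonoidHom]
      group
    set X : Subgroup G := Finset.univ.sup comp with hXdef
    have hXle : X ≤ H' := Finset.sup_le (fun h _ => hcomple h)
    have hxX : x ∈ X := by
      have h1 : comp 1 ≤ X := Finset.le_sup (Finset.mem_univ _)
      refine h1 (Subgroup.mem_map.mpr ⟨x, hxY, ?_⟩)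
      simp
    have hXp : IsPGroup p X :=
      (aux_pgroup_finset_sup Finset.univ comp (fun h => hYp.map _) hcompn).1
    refine ⟨X, hxX, hXp, le_trans hXle hlast.1, ?_⟩
    intro k hk z hz
    have hle : X ≤ X.comap (MulAut.conj k).toMonoidHom := by
      refine Finset.sup_le ?_
      intro h _
      intro w hw
      rw [Subgroup.mem_comap]
      obtain ⟨y, hy, rfl⟩ := Subgroup.mem_map.mp hw
      have hmem : (MulAut.conj k).toMonoidHom ((MulAut.conj (h : G)).toMonoidHom y)
          ∈ comp (⟨k, hk⟩ * h) := by
        refine Subgroup.mem_map.mpr ⟨y, hy, ?_⟩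
        simp only [MulAut.conj_apply, MulEquiv.coe_toMonoidHom, Subgroup.coe_mul]
        group
      exact (Finset.le_sup (f := comp) (Finset.mem_univ (⟨k, hk⟩ * h))) hmem
    have := hle hz
    rw [Subgroup.mem_comap] at this
    simpa [MulAut.conj_apply] using this

end Aux4
section Aux5

open Subgroup

variable {G : Type*} [Group G]

lemma aux_isPGroup_zpowers_of_pow {p k : ℕ} {g : G} (h : g ^ (p ^ k) = 1) :
    IsPGroup p (Subgroup.zpowers g) := by
  rintro ⟨z, hz⟩
  obtain ⟨m, rfl⟩ := hz
  refine ⟨k, ?_⟩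
  have : (g ^ m) ^ ((p : ℤ) ^ k) = 1 := by
    rw [← zpow_mul, mul_comm, zpow_mul]
    norm_cast
    rw [h, one_zpow]
  apply Subtype.ext
  push_cast
  rw [show ((p : ℤ) ^ k) = ((p ^ k : ℕ) : ℤ) by push_cast; ring] at this
  rw [zpow_natCast] at this
  simpa using this

lemma aux_pgroup_bot_of_card_coprime {p : ℕ} (hp : p.Prime) [Finite G] {K M : Subgroup G}
    (hK : IsPGroup p K) (hle : Nat.card K ∣ Nat.card M) (hM : ¬ p ∣ Nat.card M) : K = ⊥ := by
  haveI : Fact p.Prime := ⟨hp⟩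
  obtain ⟨k, hk⟩ := IsPGroup.iff_card.mp hK
  rcases Nat.eq_zero_or_pos k with h0 | hpos
  · rw [h0, pow_zero] at hk
    exact Subgroup.card_eq_one.mp hk
  · exfalso
    apply hM
    refine dvd_trans ?_ hle
    rw [hk]
    exact dvd_pow_self p hpos.ne'

lemma aux_inf_N_P_bot {p : ℕ} (hp : p.Prime) [Finite G] {N : Subgroup G}
    (hN' : ¬ p ∣ Nat.card N) (P : Sylow p G) : N ⊓ (P : Subgroup G) = ⊥ := by
  refine aux_pgroup_bot_of_card_coprime hp (P.isPGroup'.to_le inf_le_right) ?_ hN'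
  exact Subgroup.card_dvd_of_le inf_le_left

lemma aux_sup_N_P_top {p : ℕ} (hp : p.Prime) [Finite G] {N : Subgroup G} (hN : N.Normal)
    (hN' : ¬ p ∣ Nat.card N) (hquot : IsPGroup p (G ⧸ N)) (P : Sylow p G) :
    N ⊔ (P : Subgroup G) = ⊤ := by
  haveI : Fact p.Prime := ⟨hp⟩
  haveI : Finite (Subgroup G) :=
    Finite.of_injective (fun K : Subgroup G => (K : Set G)) SetLike.coe_injective
  haveI : Finite (Sylow p G) :=
    Finite.of_injective (fun Q : Sylow p G => (Q : Subgroup G)) (fun _ _ h => Sylow.ext h)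
  obtain ⟨a, ha⟩ := IsPGroup.iff_card.mp hquot
  have hNindex : N.index = p ^ a := by
    rw [Subgroup.index_eq_card]; exact ha
  have h1 : (N ⊔ (P : Subgroup G)).index ∣ p ^ a := by
    rw [← hNindex]
    exact Subgroup.index_dvd_of_le le_sup_left
  have h2 : (N ⊔ (P : Subgroup G)).index ∣ (P : Subgroup G).index :=
    Subgroup.index_dvd_of_le le_sup_right
  have h3 : ¬ p ∣ (P : Subgroup G).index := P.not_dvd_index
  obtain ⟨b, _, hbeq⟩ := (Nat.dvd_prime_pow hp).mp h1
  have hb1 : (N ⊔ (P : Subgroup G)).index = 1 := by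
    rcases Nat.eq_zero_or_pos b with h0 | hpos
    · rw [hbeq, h0, pow_zero]
    · exfalso
      exact h3 (dvd_trans (dvd_pow_self p hpos.ne') (hbeq ▸ h2))
  rwa [Subgroup.index_eq_one] at hb1

end Aux5
section Aux6

open Subgroup Pointwise

variable {G : Type*} [Group G]

lemma aux_mem_subnSet_of_commute {x c : G} (h : c * x = x * c) : c ∈ subnSet x := by
  show subnormalIn (Subgroup.zpowers x) (Subgroup.closure {x, c})
  refine aux_subn_cons (aux_normalIn_of_le_normalizer ?_ ?_) (aux_subn_refl _)
  · rw [Subgroup.zpowers_le]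
    exact Subgroup.subset_closure (Or.inl rfl)
  · have hcent : Subgroup.closure ({x, c} : Set G) ≤ Subgroup.centralizer {x} := by
      rw [Subgroup.closure_le]
      rintro z (rfl | rfl)
      · exact Subgroup.mem_centralizer_singleton_iff.mpr rfl
      · exact Subgroup.mem_centralizer_singleton_iff.mpr h
    refine le_trans hcent (aux_le_normalizer_of_conj ?_)
    rintro a ha z hz
    obtain ⟨b, rfl⟩ := hz
    have hcm : Commute a x := Subgroup.mem_centralizer_singleton_iff.mp ha
    have : a * x ^ b * a⁻¹ = x ^ b := by
      rw [(hcm.zpow_right b).eq, mul_inv_cancel_right]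
    rw [this]
    exact ⟨b, rfl⟩

lemma aux_pgroup_mem_subnSet {p : ℕ} [Fact p.Prime] [Finite G] {x y : G} (P : Sylow p G)
    (hxP : x ∈ P) (hyP : y ∈ P) : y ∈ subnSet x := by
  show subnormalIn (Subgroup.zpowers x) (Subgroup.closure {x, y})
  have hcl : Subgroup.closure ({x, y} : Set G) ≤ (P : Subgroup G) := by
    rw [Subgroup.closure_le]
    rintro z (rfl | rfl)
    exacts [hxP, hyP]
  exact aux_pgroup_subnormalIn (P.isPGroup'.to_le hcl)
    (Subgroup.zpowers_le.mpr (Subgroup.subset_closure (Or.inl rfl)))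

set_option maxHeartbeats 1000000 in
lemma aux_SubG_eq {p : ℕ} (hp : p.Prime) [Finite G] {N : Subgroup G} (hN : N.Normal)
    (hN' : ¬ p ∣ Nat.card N) (hquot : IsPGroup p (G ⧸ N)) {x : G}
    (hx : ∃ n : ℕ, orderOf x = p ^ n) (P : Sylow p G) (hxP : x ∈ P) :
    SubG x = (N ⊓ Subgroup.centralizer {x}) ⊔ (P : Subgroup G) := by
  haveI : Fact p.Prime := ⟨hp⟩
  haveI : Finite (Subgroup G) :=
    Finite.of_injective (fun K : Subgroup G => (K : Set G)) SetLike.coe_injective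
  haveI : Finite (Sylow p G) :=
    Finite.of_injective (fun Q : Sylow p G => (Q : Subgroup G)) (fun _ _ h => Sylow.ext h)
  have hxpg : IsPGroup p (Subgroup.zpowers x) := by
    obtain ⟨n, hn⟩ := hx
    exact aux_isPGroup_zpowers_of_pow (k := n) (by rw [← hn]; exact pow_orderOf_eq_one x)
  apply le_antisymm
  · rw [SubG]
    refine (Subgroup.closure_le _).mpr ?_
    intro y hy
    obtain ⟨n, f, h0, hl, hstep⟩ := (hy : subnormalIn _ _)
    obtain ⟨X, hxX, hXp, hXn⟩ := aux_chain_pgroup hxpg n f h0 hstep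
    rw [hl] at hXn
    have hyH : y ∈ Subgroup.closure ({x, y} : Set G) :=
      Subgroup.subset_closure (Or.inr rfl)
    have hd0 : orderOf y ≠ 0 := (orderOf_pos y).ne'
    set d := orderOf y with hddef
    set a := d.factorization p with hadef
    set r := ordCompl[p] d with hrdef
    have hd : p ^ a * r = d := Nat.ordProj_mul_ordCompl_eq_self d p
    have hcop : Nat.Coprime (p ^ a) r := (Nat.coprime_ordCompl hp hd0).pow_left a
    obtain ⟨u, v, huv⟩ := Nat.isCoprime_iff_coprime.mpr hcop
    set m0 := y ^ (u * ((p : ℤ) ^ a)) with hm0def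
    set q0 := y ^ (v * (r : ℤ)) with hq0def
    have hy_eq : m0 * q0 = y := by
      rw [hm0def, hq0def, ← zpow_add]
      have huv1 : u * ((p : ℤ) ^ a) + v * (r : ℤ) = 1 := by push_cast at huv ⊢; linarith
      rw [huv1, zpow_one]
    have hm0r : m0 ^ r = 1 := by
      rw [hm0def, ← zpow_natCast, ← zpow_mul]
      have hexp : u * ((p : ℤ) ^ a) * (r : ℤ) = (d : ℤ) * u := by
        rw [← hd]; push_cast; ring
      rw [hexp, zpow_mul, zpow_natCast, hddef, pow_orderOf_eq_one, one_zpow]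
    have hq0p : q0 ^ (p ^ a) = 1 := by
      rw [hq0def, ← zpow_natCast, ← zpow_mul]
      have hexp : v * (r : ℤ) * (((p ^ a : ℕ) : ℤ)) = (d : ℤ) * v := by
        rw [← hd]; push_cast; ring
      rw [hexp, zpow_mul, zpow_natCast, hddef, pow_orderOf_eq_one, one_zpow]
    have hm0H : m0 ∈ Subgroup.closure ({x, y} : Set G) := zpow_mem hyH _
    have hq0H : q0 ∈ Subgroup.closure ({x, y} : Set G) := zpow_mem hyH _
    have hm0N : m0 ∈ N := by
      have h1 : ((QuotientGroup.mk' N) m0) ^ r = 1 := by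
        rw [← map_pow, hm0r, map_one]
      obtain ⟨k, hk⟩ := hquot ((QuotientGroup.mk' N) m0)
      have ht1 : orderOf ((QuotientGroup.mk' N) m0) ∣ r := orderOf_dvd_of_pow_eq_one h1
      have ht2 : orderOf ((QuotientGroup.mk' N) m0) ∣ p ^ k :=
        orderOf_dvd_of_pow_eq_one hk
      have hcop2 : Nat.Coprime (p ^ k) r := (Nat.coprime_ordCompl hp hd0).pow_left k
      have hord1 : orderOf ((QuotientGroup.mk' N) m0) = 1 :=
        Nat.eq_one_of_dvd_coprimes hcop2 ht2 ht1
      have := orderOf_eq_one_iff.mp hord1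
      exact (QuotientGroup.eq_one_iff m0).mp this
    have hXNbot : X ⊓ N = ⊥ :=
      aux_pgroup_bot_of_card_coprime hp (hXp.to_le inf_le_left)
        (Subgroup.card_dvd_of_le inf_le_right) hN'
    have hm0cent : m0 ∈ Subgroup.centralizer ({x} : Set G) := by
      have he1 : x * (m0 * x⁻¹ * m0⁻¹) ∈ X :=
        mul_mem hxX (hXn.2 m0 hm0H x⁻¹ (inv_mem hxX))
      have he2 : x * (m0 * x⁻¹ * m0⁻¹) ∈ N := by
        have hmem := mul_mem (hN.conj_mem m0 hm0N x) (inv_mem hm0N)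
        have heq : x * (m0 * x⁻¹ * m0⁻¹) = x * m0 * x⁻¹ * m0⁻¹ := by group
        rwa [heq]
      have hbot : x * (m0 * x⁻¹ * m0⁻¹) = 1 := by
        have := Subgroup.mem_inf.mpr ⟨he1, he2⟩
        rwa [hXNbot, Subgroup.mem_bot] at this
      rw [Subgroup.mem_centralizer_singleton_iff]
      calc m0 * x = (x * (m0 * x⁻¹ * m0⁻¹))⁻¹ * (x * m0) := by group
        _ = x * m0 := by rw [hbot]; group
    have hq0pg : IsPGroup p (Subgroup.zpowers q0) := aux_isPGroup_zpowers_of_pow hq0p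
    have hZnorm : Subgroup.zpowers q0 ≤ Subgroup.normalizer (X : Set G) := by
      refine aux_le_normalizer_of_conj ?_
      intro b hb z hz
      exact hXn.2 b (Subgroup.zpowers_le.mpr hq0H hb) z hz
    have hZp : IsPGroup p (X ⊔ Subgroup.zpowers q0 : Subgroup G) :=
      IsPGroup.to_sup_of_normal_left' hXp hq0pg hZnorm
    obtain ⟨Q, hZQ⟩ := hZp.exists_le_sylow
    obtain ⟨g, hgQ⟩ := MulAction.exists_smul_eq G P Q
    have hgNP : g ∈ ((N : Set G) * ((P : Subgroup G) : Set G)) := by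
      rw [← Subgroup.normal_mul, aux_sup_N_P_top hp hN hN' hquot P]
      trivial
    obtain ⟨nn, hnn, w, hwP, hg⟩ := hgNP
    have hconjP : ∀ z, z ∈ (X ⊔ Subgroup.zpowers q0 : Subgroup G) → nn⁻¹ * z * nn ∈ P := by
      intro z hz
      have hzQ : z ∈ (Q : Subgroup G) := hZQ hz
      rw [← hgQ, Sylow.coe_subgroup_smul,
        Subgroup.mem_pointwise_smul_iff_inv_smul_mem] at hzQ
      have hzP : g⁻¹ * z * g ∈ P := by
        have h' : g⁻¹ * (z * g) ∈ (P : Subgroup G) := by simpa [MulAut.smul_def, mul_assoc] using hzQ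
        rw [← mul_assoc] at h'; exact h'
      rw [← hg] at hzP
      have heq : nn⁻¹ * z * nn = w * ((nn * w)⁻¹ * z * (nn * w)) * w⁻¹ := by group
      rw [heq]
      exact mul_mem (mul_mem hwP hzP) (inv_mem hwP)
    have h1 : nn⁻¹ * x * nn ∈ P := hconjP x (le_sup_left (a := X) hxX)
    have h2 : x⁻¹ * (nn⁻¹ * x * nn) ∈ P := mul_mem (inv_mem hxP) h1
    have h3 : x⁻¹ * (nn⁻¹ * x * nn) ∈ N := by
      have hmem := mul_mem (hN.conj_mem nn⁻¹ (inv_mem hnn) x⁻¹) hnn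
      have heq : x⁻¹ * (nn⁻¹ * x * nn) = x⁻¹ * nn⁻¹ * (x⁻¹)⁻¹ * nn := by group
      rwa [heq]
    have h4 : x⁻¹ * (nn⁻¹ * x * nn) = 1 := by
      have := Subgroup.mem_inf.mpr ⟨h3, h2⟩
      rwa [aux_inf_N_P_bot hp hN' P, Subgroup.mem_bot] at this
    have h5 : x = nn⁻¹ * x * nn := inv_mul_eq_one.mp h4
    have hnnC : nn ∈ N ⊓ Subgroup.centralizer ({x} : Set G) := by
      refine Subgroup.mem_inf.mpr ⟨hnn, Subgroup.mem_centralizer_singleton_iff.mpr ?_⟩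
      conv_lhs => rw [h5]
      group
    have h6 : nn⁻¹ * q0 * nn ∈ P :=
      hconjP q0 (le_sup_right (a := X) (Subgroup.mem_zpowers q0))
    have hq0CP : q0 ∈ (N ⊓ Subgroup.centralizer {x}) ⊔ (P : Subgroup G) := by
      have heq : q0 = nn * (nn⁻¹ * q0 * nn) * nn⁻¹ := by group
      rw [heq]
      exact mul_mem (mul_mem (le_sup_left (b := (P : Subgroup G)) hnnC)
        (le_sup_right (a := (N ⊓ Subgroup.centralizer {x})) h6))
        (inv_mem (le_sup_left (b := (P : Subgroup G)) hnnC))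
    have hm0CP : m0 ∈ (N ⊓ Subgroup.centralizer {x}) ⊔ (P : Subgroup G) :=
      le_sup_left (b := (P : Subgroup G)) (Subgroup.mem_inf.mpr ⟨hm0N, hm0cent⟩)
    rw [SetLike.mem_coe, ← hy_eq]
    exact mul_mem hm0CP hq0CP
  · refine sup_le ?_ ?_
    · intro c hc
      rw [Subgroup.mem_inf] at hc
      exact Subgroup.subset_closure
        (aux_mem_subnSet_of_commute (Subgroup.mem_centralizer_singleton_iff.mp hc.2))
    · intro z hz
      exact Subgroup.subset_closure (aux_pgroup_mem_subnSet P hxP hz)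

end Aux6
theorem stmt_7 {G : Type*} [Group G] [Finite G] (p : ℕ) (hp : p.Prime)
    (N : Subgroup G) (hN : N.Normal) (hN' : ¬ p ∣ Nat.card N)
    (hquot : IsPGroup p (G ⧸ N))
    (x : G) (hx : ∃ n : ℕ, orderOf x = p ^ n)
    (P : Sylow p G) (hxP : x ∈ P) :
    N ⊓ SubG x = CNclosure N x ∧
      CNclosure N x ≤ SubG x ∧
      (∀ s ∈ SubG x, ∀ c ∈ CNclosure N x, s * c * s⁻¹ ∈ CNclosure N x) ∧
      (¬ p ∣ Nat.card (CNclosure N x)) ∧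
      (∃ k : ℕ, ((CNclosure N x).subgroupOf (SubG x)).index = p ^ k) ∧
      SubG x = CNclosure N x ⊔ (P : Subgroup G) := by
  haveI : Fact p.Prime := ⟨hp⟩
  have hL : SubG x = (N ⊓ Subgroup.centralizer {x}) ⊔ (P : Subgroup G) :=
    aux_SubG_eq hp hN hN' hquot hx P hxP
  have hCS : (N ⊓ Subgroup.centralizer {x}) ≤ SubG x := by rw [hL]; exact le_sup_left
  have hPS : (P : Subgroup G) ≤ SubG x := by rw [hL]; exact le_sup_right
  have hDS : CNclosure N x ≤ SubG x := by
    refine (Subgroup.closure_le _).mpr ?_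
    rintro g ⟨s, hs, c, hc, rfl⟩
    exact mul_mem (mul_mem hs (hCS hc)) (inv_mem hs)
  have hDN : CNclosure N x ≤ N := by
    refine (Subgroup.closure_le _).mpr ?_
    rintro g ⟨s, hs, c, hc, rfl⟩
    exact hN.conj_mem c (Subgroup.mem_inf.mp hc).1 s
  have hCD : (N ⊓ Subgroup.centralizer {x}) ≤ CNclosure N x := fun c hc =>
    Subgroup.subset_closure ⟨1, one_mem _, c, hc, by group⟩
  have hnormD : ∀ s ∈ SubG x, ∀ c ∈ CNclosure N x, s * c * s⁻¹ ∈ CNclosure N x := by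
    intro s hs c hc
    have hc' : c ∈ Subgroup.closure
        {g | ∃ t ∈ SubG x, ∃ c' ∈ N ⊓ Subgroup.centralizer {x}, g = t * c' * t⁻¹} := hc
    clear hc
    induction hc' using Subgroup.closure_induction with
    | mem z hz =>
      obtain ⟨t, ht, c', hcc, rfl⟩ := hz
      exact Subgroup.subset_closure ⟨s * t, mul_mem hs ht, c', hcc, by group⟩
    | one => simpa using one_mem (CNclosure N x)
    | mul a b ha hb pa pb =>
      have heq : s * (a * b) * s⁻¹ = (s * a * s⁻¹) * (s * b * s⁻¹) := by group
      rw [heq]; exact mul_mem pa pb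
    | inv a ha pa =>
      have heq : s * a⁻¹ * s⁻¹ = (s * a * s⁻¹)⁻¹ := by group
      rw [heq]; exact inv_mem pa
  have hSDP : SubG x = CNclosure N x ⊔ (P : Subgroup G) :=
    le_antisymm (by rw [hL]; exact sup_le_sup_right hCD _) (sup_le hDS hPS)
  have hdecomp : ∀ g ∈ CNclosure N x ⊔ (P : Subgroup G),
      ∃ dd ∈ CNclosure N x, ∃ w ∈ (P : Subgroup G), g = dd * w := by
    intro g hg
    have hunion : CNclosure N x ⊔ (P : Subgroup G) =
        Subgroup.closure ((CNclosure N x : Set G) ∪ (P : Subgroup G)) := by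
      rw [Subgroup.closure_union, Subgroup.closure_eq, Subgroup.closure_eq]
    rw [hunion] at hg
    induction hg using Subgroup.closure_induction with
    | mem z hz =>
      rcases hz with hz | hz
      · exact ⟨z, hz, 1, one_mem _, by simp⟩
      · exact ⟨1, one_mem _, z, hz, by simp⟩
    | one => exact ⟨1, one_mem _, 1, one_mem _, by simp⟩
    | mul a b ha hb pa pb =>
      obtain ⟨d1, hd1, w1, hw1, rfl⟩ := pa
      obtain ⟨d2, hd2, w2, hw2, rfl⟩ := pb
      exact ⟨d1 * (w1 * d2 * w1⁻¹), mul_mem hd1 (hnormD w1 (hPS hw1) d2 hd2),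
        w1 * w2, mul_mem hw1 hw2, by group⟩
    | inv a ha pa =>
      obtain ⟨d1, hd1, w1, hw1, rfl⟩ := pa
      refine ⟨w1⁻¹ * d1⁻¹ * w1⁻¹⁻¹, hnormD w1⁻¹ (hPS (inv_mem hw1)) d1⁻¹ (inv_mem hd1),
        w1⁻¹, inv_mem hw1, by group⟩
  have hinf : N ⊓ SubG x = CNclosure N x := by
    apply le_antisymm
    · intro g hg
      obtain ⟨hgN, hgS⟩ := Subgroup.mem_inf.mp hg
      rw [hSDP] at hgS
      obtain ⟨dd, hdd, w, hw, rfl⟩ := hdecomp _ hgS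
      have hwN : w ∈ N := by
        have := mul_mem (inv_mem (hDN hdd)) hgN
        simpa [mul_assoc] using this
      have hwbot : w ∈ N ⊓ (P : Subgroup G) := Subgroup.mem_inf.mpr ⟨hwN, hw⟩
      rw [aux_inf_N_P_bot hp hN' P, Subgroup.mem_bot] at hwbot
      rw [hwbot, mul_one]
      exact hdd
    · exact le_inf hDN hDS
  refine ⟨hinf, hDS, hnormD, ?_, ?_, hSDP⟩
  · intro hdvd
    exact hN' (hdvd.trans (Subgroup.card_dvd_of_le hDN))
  · set φ : ↥(SubG x) →* G ⧸ N := (QuotientGroup.mk' N).comp (SubG x).subtype with hφdef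
    have hker : φ.ker = (CNclosure N x).subgroupOf (SubG x) := by
      rw [← hinf, Subgroup.inf_subgroupOf_right]
      rw [hφdef, ← MonoidHom.comap_ker, QuotientGroup.ker_mk']
      rfl
    have hrange : IsPGroup p φ.range := by
      rintro ⟨q, hq⟩
      obtain ⟨k, hk⟩ := hquot q
      refine ⟨k, ?_⟩
      apply Subtype.ext
      rw [SubgroupClass.coe_pow]
      simpa using hk
    obtain ⟨k, hk⟩ := IsPGroup.iff_card.mp hrange
    refine ⟨k, ?_⟩
    rw [← hker, Subgroup.index_ker, hk]
end

section
/- Let G be a finite p-solvable group and let x ∈ G be a p-element with ⟨x⟩ subnormal in Sub_G(x) and ⟨x⟩ not subnormal in G. Define L_0 = O^{p'}(G) and inductively K_i = O^p(L_{i-1}), L_i = O^{p'}(K_i). Then there exists an index j with L_j a p-group, L_j ≤ Sub_G(x), and G ≠ L_j·Sub_G(x); hence the index k = min{i ≥ 1 : G ≠ L_i·Sub_G(x)} is well defined. -/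
open scoped Pointwise

/-- `G` is `p`-solvable: it has a subnormal series in which each factor is either a
`p`-group (the index of one term in the next is a power of `p`) or a `p'`-group. -/
def IsPSolvable (p : ℕ) (G : Type*) [Group G] : Prop :=
  ∃ n : ℕ, ∃ f : Fin (n + 1) → Subgroup G, f 0 = ⊥ ∧ f (Fin.last n) = ⊤ ∧
    ∀ i : Fin n, normalIn (f i.castSucc) (f i.succ) ∧
      ((∃ e : ℕ, ((f i.castSucc).subgroupOf (f i.succ)).index = p ^ e) ∨
        ¬ p ∣ ((f i.castSucc).subgroupOf (f i.succ)).index)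

lemma normalIn_subgroupOf_normal {G : Type*} [Group G] {A B : Subgroup G} (h : normalIn A B) :
    (A.subgroupOf B).Normal := by
  constructor
  intro n hn g
  rw [Subgroup.mem_subgroupOf] at hn ⊢
  exact h.2 g g.2 n hn

lemma key_lemma {G : Type*} [Group G] [Finite G] {p : ℕ} (hp : p.Prime)
    (hsolv : IsPSolvable p G) (H : Subgroup G) (hH : H ≠ ⊥) :
    ∃ N : Subgroup G, N ≤ H ∧ N ≠ H ∧ normalIn N H ∧
      ((∃ e : ℕ, (N.subgroupOf H).index = p ^ e) ∨ ¬ p ∣ (N.subgroupOf H).index) := by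
  classical
  obtain ⟨n, f, hf0, hfn, hfs⟩ := hsolv
  set g : ℕ → Subgroup G := fun i => f ⟨min i n, by omega⟩ with hg
  have hg0 : g 0 = ⊥ := by
    have : (⟨min 0 n, by omega⟩ : Fin (n+1)) = 0 := by ext; simp
    rw [hg]; simpa [this] using hf0
  have hgn : g n = ⊤ := by
    have : (⟨min n n, by omega⟩ : Fin (n+1)) = Fin.last n := by ext; simp [Fin.last]
    rw [hg]; exact (congrArg f this).trans hfn
  have hstep : ∀ i, i < n → normalIn (g i) (g (i+1)) ∧
      ((∃ e : ℕ, ((g i).subgroupOf (g (i+1))).index = p ^ e) ∨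
        ¬ p ∣ ((g i).subgroupOf (g (i+1))).index) := by
    intro i hi
    have h1 : g i = f (⟨i, hi⟩ : Fin n).castSucc := by
      rw [hg]; congr 1; ext; simp [Nat.min_eq_left hi.le]
    have h2 : g (i+1) = f (⟨i, hi⟩ : Fin n).succ := by
      rw [hg]; congr 1; ext; simp [Nat.min_eq_left hi]
    rw [h1, h2]
    exact hfs ⟨i, hi⟩
  have hPn : H ≤ g n := hgn ▸ le_top
  have hex : ∃ t, H ≤ g t := ⟨n, hPn⟩
  have ht : H ≤ g (Nat.find hex) := Nat.find_spec hex
  have htn : Nat.find hex ≤ n := Nat.find_min' hex hPn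
  have ht0 : Nat.find hex ≠ 0 := by
    intro h0
    rw [h0, hg0, le_bot_iff] at ht
    exact hH ht
  obtain ⟨s, hts⟩ : ∃ s, Nat.find hex = s + 1 := ⟨Nat.find hex - 1, by omega⟩
  rw [hts] at ht
  have hs : ¬ H ≤ g s := Nat.find_min hex (by omega)
  have hsn : s < n := by omega
  obtain ⟨hnorm, hidx⟩ := hstep s hsn
  refine ⟨g s ⊓ H, inf_le_right, ?_, ?_, ?_⟩
  · intro he
    exact hs (he ▸ inf_le_left)
  · refine ⟨inf_le_right, ?_⟩
    intro k hk h hh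
    exact ⟨hnorm.2 k (ht hk) h hh.1, H.mul_mem (H.mul_mem hk hh.2) (H.inv_mem hk)⟩
  · have hrel : ((g s ⊓ H).subgroupOf H).index = (g s).relIndex H := by
      rw [Subgroup.relIndex, Subgroup.inf_subgroupOf_right]
    have : ((g s).subgroupOf (g (s+1))).Normal := normalIn_subgroupOf_normal hnorm
    have hdvd : (g s).relIndex H ∣ ((g s).subgroupOf (g (s+1))).index := by
      rw [← Subgroup.relIndex_subgroupOf ht]
      exact Subgroup.relIndex_dvd_index_of_normal _ _
    rw [hrel]
    rcases hidx with ⟨e, he⟩ | hnd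
    · rw [he] at hdvd
      obtain ⟨e', _, he'⟩ := (Nat.dvd_prime_pow hp).mp hdvd
      exact Or.inl ⟨e', he'⟩
    · exact Or.inr fun hpd => hnd (hpd.trans hdvd)


theorem stmt_16 {G : Type*} [Group G] [Finite G] (p : ℕ) (hp : p.Prime)
    (hsolv : IsPSolvable p G)
    (x : G) (hx : ∃ n : ℕ, orderOf x = p ^ n)
    (hxsub : subnormalIn (Subgroup.zpowers x) (SubG x))
    (hxnotsub : ¬ subnormalIn (Subgroup.zpowers x) (⊤ : Subgroup G))
    (L K : ℕ → Subgroup G)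
    -- `L 0 = O^{p'}(G)`: the smallest normal subgroup with `p'`-quotient
    (hL0 : (L 0).Normal ∧ ¬ p ∣ (L 0).index ∧
      ∀ M : Subgroup G, M.Normal → ¬ p ∣ M.index → L 0 ≤ M)
    -- `K (i+1) = O^p(L i)`: the smallest normal subgroup of `L i` with `p`-power quotient
    (hK : ∀ i : ℕ, K (i + 1) ≤ L i ∧ normalIn (K (i + 1)) (L i) ∧
      (∃ e : ℕ, ((K (i + 1)).subgroupOf (L i)).index = p ^ e) ∧
      ∀ M : Subgroup G, M ≤ L i → normalIn M (L i) →
        (∃ e : ℕ, (M.subgroupOf (L i)).index = p ^ e) → K (i + 1) ≤ M)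
    -- `L (i+1) = O^{p'}(K (i+1))`: the smallest normal subgroup of `K (i+1)` with `p'`-quotient
    (hLsucc : ∀ i : ℕ, L (i + 1) ≤ K (i + 1) ∧ normalIn (L (i + 1)) (K (i + 1)) ∧
      ¬ p ∣ ((L (i + 1)).subgroupOf (K (i + 1))).index ∧
      ∀ M : Subgroup G, M ≤ K (i + 1) → normalIn M (K (i + 1)) →
        ¬ p ∣ (M.subgroupOf (K (i + 1))).index → L (i + 1) ≤ M) :
    (∃ j : ℕ, IsPGroup p ↥(L j) ∧ L j ≤ SubG x ∧
      ((L j : Set G) * (SubG x : Set G)) ≠ Set.univ) ∧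
    ∃ k : ℕ, 0 < k ∧ ((L k : Set G) * (SubG x : Set G)) ≠ Set.univ ∧
      ∀ i : ℕ, 0 < i → i < k → ((L i : Set G) * (SubG x : Set G)) = Set.univ := by
  classical
  have hSub_ne : (SubG x : Set G) ≠ Set.univ := by
    intro h
    exact hxnotsub (by
      rwa [show SubG x = ⊤ from SetLike.coe_injective (h.trans (Subgroup.coe_top (G := G)).symm)]
        at hxsub)
  have hmono : ∀ i, L (i + 1) ≤ L i := fun i => (hLsucc i).1.trans (hK i).1
  have hbot : ∃ j, L j = ⊥ := by
    by_contra hb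
    push_neg at hb
    have hlt : ∀ i, L (i + 1) < L i := by
      intro i
      rcases lt_or_eq_of_le (hmono i) with h | heq
      · exact h
      · exfalso
        have heqK : K (i + 1) = L i := le_antisymm (hK i).1 (heq ▸ (hLsucc i).1)
        obtain ⟨N, hNle, hNne, hNnorm, hNidx⟩ := key_lemma hp hsolv (L i) (hb i)
        rcases hNidx with ⟨e, he⟩ | hp'
        · have hKle := (hK i).2.2.2 N hNle hNnorm ⟨e, he⟩
          exact hNne (le_antisymm hNle (heqK ▸ hKle))
        · have hLle := (hLsucc i).2.2.2 N (by rw [heqK]; exact hNle)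
            (by rw [heqK]; exact hNnorm) (by rw [heqK]; exact hp')
          exact hNne (le_antisymm hNle (heq ▸ hLle))
    have hcard : ∀ i, Nat.card (L (i + 1)) < Nat.card (L i) := by
      intro i
      have hss : (L (i + 1) : Set G) ⊂ (L i : Set G) := SetLike.coe_ssubset_coe.mpr (hlt i)
      have := Set.ncard_lt_ncard hss (Set.toFinite _)
      rwa [← Nat.card_coe_set_eq, ← Nat.card_coe_set_eq] at this
    have hdesc : ∀ i, Nat.card (L i) + i ≤ Nat.card (L 0) := by
      intro i
      induction i with
      | zero => simp
      | succ k ih => have := hcard k; omega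
    have := hdesc (Nat.card (L 0) + 1)
    omega
  obtain ⟨j, hj⟩ := hbot
  have hprod : ∀ m, L m = ⊥ → ((L m : Set G) * (SubG x : Set G)) ≠ Set.univ := by
    intro m hm
    rw [hm, Subgroup.coe_bot]
    have : ({1} : Set G) * (SubG x : Set G) = (SubG x : Set G) := by
      simp
    rw [this]
    exact hSub_ne
  constructor
  · refine ⟨j, ?_, ?_, hprod j hj⟩
    · rw [hj]; exact IsPGroup.of_bot
    · rw [hj]; exact bot_le
  · have hj1 : L (j + 1) = ⊥ := le_bot_iff.mp (hj ▸ hmono j)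
    have hex : ∃ k, 0 < k ∧ ((L k : Set G) * (SubG x : Set G)) ≠ Set.univ :=
      ⟨j + 1, Nat.succ_pos _, hprod (j + 1) hj1⟩
    refine ⟨Nat.find hex, (Nat.find_spec hex).1, (Nat.find_spec hex).2, ?_⟩
    intro i h0 hik
    by_contra hne
    exact Nat.find_min hex hik ⟨h0, hne⟩
end

section
/- Let G be a finite group with normal p-complement N, p odd, x ∈ G a p-element, and P ∈ Syl_p(G) with x ∈ P. Then x ∈ Z(Sub_G(x)) if and only if x ∈ Z(P); and ⟨x⟩ ⊴ Sub_G(x) if and only if ⟨x⟩ ⊴ P. -/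
section Aux

open Subgroup

variable {G : Type*} [Group G]

lemma normalIn_self (A : Subgroup G) : normalIn A A :=
  ⟨le_rfl, fun k hk h hh => A.mul_mem (A.mul_mem hk hh) (A.inv_mem hk)⟩

/-- A p-subgroup intersects a subgroup of order prime to `p` trivially. -/
lemma pInter_eq_bot [Finite G] {p : ℕ} (hp : p.Prime) {Q K : Subgroup G}
    (hQ : IsPGroup p Q) (hK : ¬ p ∣ Nat.card K) : Q ⊓ K = ⊥ := by
  haveI := Fact.mk hp
  obtain ⟨n, hn⟩ := (IsPGroup.iff_card (p := p) (G := ↥(Q ⊓ K))).mp (hQ.to_le inf_le_left)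
  rcases Nat.eq_zero_or_pos n with h0 | h0
  · exact Subgroup.eq_bot_of_card_eq _ (by rw [hn, h0, pow_zero])
  · exact absurd (dvd_trans (dvd_pow_self p h0.ne')
      (hn ▸ Subgroup.card_dvd_of_le inf_le_right)) hK

/-- Any subgroup of a finite `p`-group is subnormal. -/
lemma subnormalIn_of_le_of_pgroup [Finite G] {p : ℕ} (hp : p.Prime) {A H : Subgroup G}
    (hH : IsPGroup p H) (hA : A ≤ H) : subnormalIn A H := by
  haveI := Fact.mk hp
  haveI : Group.IsNilpotent ↥H := hH.isNilpotent
  have nc : NormalizerCondition ↥H := normalizerCondition_of_isNilpotent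
  set c : ℕ → Subgroup ↥H := fun k => (fun S : Subgroup ↥H => Subgroup.normalizer (S : Set ↥H))^[k] (A.subgroupOf H) with hcdef
  have hcs : ∀ k, c (k + 1) = Subgroup.normalizer (c k : Set ↥H) := fun k =>
    Function.iterate_succ_apply' _ _ _
  have htop : ∀ k, c k = ⊤ → c (k + 1) = ⊤ := by
    intro k hk
    rw [hcs k, hk]
    exact eq_top_iff.mpr Subgroup.le_normalizer
  have key : ∀ k, c k = ⊤ ∨ k < Nat.card (c k) := by
    intro k
    induction k with
    | zero => exact Or.inr Nat.card_pos
    | succ k ih =>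
      by_cases hk : c k = ⊤
      · exact Or.inl (htop k hk)
      · rcases ih with h | h
        · exact absurd h hk
        · right
          have hlt : c k < c (k + 1) := by
            rw [hcs k]; exact nc _ (lt_top_iff_ne_top.mpr hk)
          have hcard : Nat.card (c k) < Nat.card (c (k + 1)) := by
            have e1 : Nat.card (c k) = ((c k : Set ↥H)).ncard := by
              rw [← Nat.card_coe_set_eq]; rfl
            have e2 : Nat.card (c (k + 1)) = ((c (k + 1) : Set ↥H)).ncard := by
              rw [← Nat.card_coe_set_eq]; rfl
            rw [e1, e2]
            exact Set.ncard_lt_ncard (SetLike.coe_ssubset_coe.mpr hlt) (Set.toFinite _)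
          exact lt_of_le_of_lt (Nat.succ_le_of_lt h) hcard
  set n := Nat.card ↥H with hndef
  have hn : c n = ⊤ := by
    rcases key n with h | h
    · exact h
    · exact absurd (Subgroup.card_le_card_group (c n)) (not_le.mpr h)
  refine ⟨n, fun i => (c i.val).map H.subtype, ?_, ?_, ?_⟩
  · show (c ((0 : Fin (n + 1)).val)).map H.subtype = A
    simp only [Fin.val_zero]
    show ((A.subgroupOf H).map H.subtype) = A
    rw [Subgroup.subgroupOf_map_subtype, inf_eq_left.mpr hA]
  · show (c ((Fin.last n).val)).map H.subtype = H
    simp only [Fin.val_last]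
    rw [hn, ← MonoidHom.range_eq_map, Subgroup.range_subtype]
  · intro i
    constructor
    · have : c (i.castSucc.val) ≤ c (i.succ.val) := by
        simp only [Fin.coe_castSucc, Fin.val_succ]
        rw [hcs i.val]
        exact Subgroup.le_normalizer
      exact Subgroup.map_mono this
    · intro k hk h hh
      simp only [Fin.coe_castSucc, Fin.val_succ] at hk hh ⊢
      rw [Subgroup.mem_map] at hk hh ⊢
      obtain ⟨k', hk', rfl⟩ := hk
      obtain ⟨h', hh', rfl⟩ := hh
      rw [hcs i.val] at hk'
      refine ⟨k' * h' * k'⁻¹, (Subgroup.mem_normalizer_iff.mp hk' h').mp hh', by simp⟩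

/-- From a subnormal chain starting at a `p`-group `A` one gets a `p`-group `W` with
`A ≤ W` and `W` normal in the top group. -/
lemma exists_pgroup_normalIn [Finite G] {p : ℕ} (hp : p.Prime) :
    ∀ (n : ℕ) (A H : Subgroup G), IsPGroup p A →
      ∀ f : Fin (n + 1) → Subgroup G, f 0 = A → f (Fin.last n) = H →
      (∀ i : Fin n, normalIn (f i.castSucc) (f i.succ)) →
      ∃ W : Subgroup G, IsPGroup p W ∧ A ≤ W ∧ normalIn W H := by
  intro n
  induction n with
  | zero =>
    intro A H hA f h0 hl _
    have hAH : A = H := by rw [← h0, ← hl]; rfl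
    exact ⟨A, hA, le_rfl, hAH ▸ normalIn_self A⟩
  | succ n ih =>
    intro A H hA f h0 hl hstep
    set K := f (Fin.last n).castSucc with hKdef
    have hKH : normalIn K H := by
      have := hstep (Fin.last n)
      rwa [Fin.succ_last, hl] at this
    obtain ⟨W, hWp, hAW, hWK⟩ := ih A K hA (fun i => f i.castSucc)
      (by simpa using h0) rfl
      (by
        intro i
        have := hstep i.castSucc
        rwa [Fin.succ_castSucc] at this)
    have hWle : W ≤ K := hWK.1
    set Wc : G → Subgroup G := fun h => W.map (MulAut.conj h).toMonoidHom with hWcdef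
    have hWcle : ∀ h ∈ H, Wc h ≤ K := by
      rintro h hh g hg
      rw [hWcdef, Subgroup.mem_map] at hg
      obtain ⟨w, hw, rfl⟩ := hg
      simpa using hKH.2 h hh w (hWle hw)
    have hWcnormal : ∀ h ∈ H, ∀ k ∈ K, ∀ u ∈ Wc h, k * u * k⁻¹ ∈ Wc h := by
      intro h hh k hk u hu
      rw [hWcdef, Subgroup.mem_map] at hu
      obtain ⟨w, hw, rfl⟩ := hu
      have h1 : h⁻¹ * k * h ∈ K := by simpa using hKH.2 h⁻¹ (H.inv_mem hh) k hk
      have h2 : (h⁻¹ * k * h) * w * (h⁻¹ * k * h)⁻¹ ∈ W := hWK.2 _ h1 w hw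
      refine Subgroup.mem_map.mpr ⟨_, h2, ?_⟩
      simp only [MulEquiv.coe_toMonoidHom, MulAut.conj_apply]
      group
    haveI : Fintype ↥H := Fintype.ofFinite _
    set D : ↥H → Subgroup ↥K := fun h => (Wc ↑h).subgroupOf K with hDdef
    have hDn : ∀ h, (D h).Normal := by
      intro h
      constructor
      intro u hu g
      rw [hDdef, Subgroup.mem_subgroupOf] at hu ⊢
      have : (↑(g * u * g⁻¹) : G) = ↑g * ↑u * (↑g)⁻¹ := by simp
      rw [this]
      exact hWcnormal ↑h h.2 ↑g g.2 ↑u hu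
    have hDp : ∀ h, IsPGroup p (D h) := fun h =>
      (hWp.map (MulAut.conj (↑h : G)).toMonoidHom).comap_of_injective K.subtype
        K.subtype_injective
    set T : Subgroup ↥K := ⨆ h : ↥H, D h with hTdef
    have hTsub : IsPGroup p T ∧ T.Normal := by
      have hT2 : T = Finset.univ.sup D := by
        rw [Finset.sup_eq_iSup]
        simp [hTdef]
      rw [hT2]
      refine Finset.sup_induction (p := fun (S : Subgroup ↥K) => IsPGroup p S ∧ S.Normal)
        ⟨IsPGroup.of_bot, inferInstance⟩ ?_ ?_
      · intro a ha b hb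
        haveI := ha.2; haveI := hb.2
        exact ⟨IsPGroup.to_sup_of_normal_right ha.1 hb.1, Subgroup.sup_normal a b⟩
      · intro i _
        exact ⟨hDp i, hDn i⟩
    set W' : Subgroup G := T.map K.subtype with hW'def
    have hW'eq : W' = ⨆ h : ↥H, Wc ↑h := by
      rw [hW'def, hTdef, Subgroup.map_iSup]
      exact iSup_congr fun h => by
        rw [hDdef]
        show ((Wc ↑h).subgroupOf K).map K.subtype = Wc ↑h
        rw [Subgroup.subgroupOf_map_subtype, inf_eq_left.mpr (hWcle ↑h h.2)]
    have hW'p : IsPGroup p W' := hTsub.1.map _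
    have hWW' : W ≤ W' := by
      rw [hW'eq]
      refine le_trans ?_ (le_iSup (fun h : ↥H => Wc ↑h) (⟨1, H.one_mem⟩ : ↥H))
      intro w hw
      exact Subgroup.mem_map.mpr ⟨w, hw, by simp⟩
    have hconjcomp : ∀ k h : G,
        (Wc h).map (MulAut.conj k).toMonoidHom = Wc (k * h) := by
      intro k h
      rw [hWcdef]
      show (W.map (MulAut.conj h).toMonoidHom).map (MulAut.conj k).toMonoidHom
          = W.map (MulAut.conj (k * h)).toMonoidHom
      rw [Subgroup.map_map]
      congr 1
      ext w
      simp only [MonoidHom.comp_apply, MulEquiv.coe_toMonoidHom, MulAut.conj_apply]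
      group
    refine ⟨W', hW'p, hAW.trans hWW', ?_, ?_⟩
    · rw [hW'eq]
      exact iSup_le fun h => (hWcle ↑h h.2).trans hKH.1
    · intro k hk u hu
      have h1 : k * u * k⁻¹ ∈ W'.map (MulAut.conj k).toMonoidHom :=
        Subgroup.mem_map.mpr ⟨u, hu, by simp⟩
      have h2 : W'.map (MulAut.conj k).toMonoidHom ≤ W' := by
        rw [hW'eq, Subgroup.map_iSup]
        refine iSup_le fun h => ?_
        rw [hconjcomp]
        exact le_iSup (fun h : ↥H => Wc ↑h) (⟨k * ↑h, H.mul_mem hk h.2⟩ : ↥H)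
      exact h2 h1

/-- In a finite group with a normal subgroup of order prime to `p` and `p`-group quotient,
every element decomposes as an element of `M` times an element of a given Sylow subgroup. -/
lemma exists_decomp {Γ : Type*} [Group Γ] [Finite Γ] {p : ℕ} (hp : p.Prime)
    (M : Subgroup Γ) [hMn : M.Normal] (hM : ¬ p ∣ Nat.card M) (hq : IsPGroup p (Γ ⧸ M))
    (Q : Sylow p Γ) (g : Γ) : ∃ m ∈ M, ∃ q ∈ (Q : Subgroup Γ), g = m * q := by
  haveI := Fact.mk hp
  obtain ⟨mm, hmm⟩ := (IsPGroup.iff_card (p := p) (G := Γ ⧸ M)).mp hq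
  have hcard : Nat.card Γ = Nat.card (Γ ⧸ M) * Nat.card M :=
    Subgroup.card_eq_card_quotient_mul_card_subgroup M
  have hQcard : Nat.card (Q : Subgroup Γ) = p ^ mm := by
    rw [Sylow.card_eq_multiplicity]
    congr 1
    rw [hcard, hmm, Nat.factorization_mul (pow_ne_zero mm hp.pos.ne') Nat.card_pos.ne',
      Nat.Prime.factorization_pow hp]
    simp [Nat.factorization_eq_zero_of_not_dvd hM]
  set f : ↥(Q : Subgroup Γ) →* Γ ⧸ M := (QuotientGroup.mk' M).comp (Q : Subgroup Γ).subtype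
      with hfdef
  have hinj : Function.Injective f := by
    rw [← MonoidHom.ker_eq_bot_iff]
    rw [eq_bot_iff]
    intro a ha
    rw [MonoidHom.mem_ker, hfdef, MonoidHom.comp_apply] at ha
    have haM : (↑a : Γ) ∈ M := (QuotientGroup.eq_one_iff _).mp ha
    have : (↑a : Γ) ∈ (Q : Subgroup Γ) ⊓ M := ⟨a.2, haM⟩
    rw [pInter_eq_bot hp Q.isPGroup' hM, Subgroup.mem_bot] at this
    simpa [Subgroup.mem_bot] using Subtype.ext this
  have hrange : f.range = (Q : Subgroup Γ).map (QuotientGroup.mk' M) := by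
    rw [hfdef, MonoidHom.range_comp, Subgroup.range_subtype]
  have hrcard : Nat.card f.range = p ^ mm := by
    rw [← hQcard]
    exact (Nat.card_congr (MonoidHom.ofInjective hinj).toEquiv).symm
  have htop : f.range = ⊤ :=
    Subgroup.eq_top_of_card_eq _ (by rw [hrcard, ← hmm])
  have : (QuotientGroup.mk' M) g ∈ f.range := htop ▸ Subgroup.mem_top _
  rw [hrange, Subgroup.mem_map] at this
  obtain ⟨q, hq', hq''⟩ := this
  refine ⟨g * q⁻¹, ?_, q, hq', by group⟩
  have : (QuotientGroup.mk' M) (g * q⁻¹) = 1 := by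
    rw [map_mul, map_inv, ← hq'']
    group
  exact (QuotientGroup.eq_one_iff _).mp this

end Aux

/-- In a finite group with normal `p`-complement `N`, if `x` lies in Sylow subgroups `P` and
`R`, then `R` is conjugate to `P` by an element of `N` centralizing `x`. -/
lemma sylow_transfer {G : Type*} [Group G] [Finite G] {p : ℕ} (hp : p.Prime)
    {N : Subgroup G} (hN : N.Normal) (hN' : ¬ p ∣ Nat.card N) (hquot : IsPGroup p (G ⧸ N))
    {x : G} (P : Sylow p G) (hxP : x ∈ P) (R : Sylow p G) (hxR : x ∈ R) :
    ∃ m : G, m ∈ N ∧ m * x * m⁻¹ = x ∧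
      ∀ s ∈ (R : Subgroup G), m⁻¹ * s * m ∈ (P : Subgroup G) := by
  haveI := Fact.mk hp
  haveI : Finite (Sylow p G) :=
    Finite.of_injective (fun S : Sylow p G => (S : Subgroup G))
      (fun S T h => Sylow.ext h)
  obtain ⟨g, hg⟩ := MulAction.exists_smul_eq G P R
  haveI := hN
  obtain ⟨m, hm, q, hq, rfl⟩ := exists_decomp hp N hN' hquot P g
  have hqP : q • P = P := Sylow.smul_eq_iff_mem_normalizer.mpr (Subgroup.le_normalizer hq)
  have hR : R = m • P := by rw [← hg, mul_smul, hqP]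
  have hconjinv : ∀ s : G, (MulAut.conj m)⁻¹ • s = m⁻¹ * s * m := by
    intro s
    have h1 : (MulAut.conj m)⁻¹ = MulAut.conj m⁻¹ := (map_inv MulAut.conj m).symm
    rw [h1]
    show (MulAut.conj m⁻¹) s = m⁻¹ * s * m
    rw [MulAut.conj_apply, inv_inv]
  have hmem : ∀ s, s ∈ (R : Subgroup G) ↔ m⁻¹ * s * m ∈ (P : Subgroup G) := by
    intro s
    rw [hR]
    show s ∈ (↑(m • P) : Subgroup G) ↔ _
    rw [Sylow.coe_subgroup_smul, Subgroup.mem_pointwise_smul_iff_inv_smul_mem, hconjinv]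
  have hxm : m⁻¹ * x * m ∈ (P : Subgroup G) := (hmem x).mp hxR
  have hd : x⁻¹ * (m⁻¹ * x * m) ∈ (P : Subgroup G) ⊓ N := by
    constructor
    · exact Subgroup.mul_mem _ (Subgroup.inv_mem _ hxP) hxm
    · have h1 : x⁻¹ * m⁻¹ * x ∈ N := by
        simpa [mul_assoc] using hN.conj_mem m⁻¹ (N.inv_mem hm) x⁻¹
      have h2 := N.mul_mem h1 hm
      simpa [mul_assoc] using h2
  rw [pInter_eq_bot hp P.isPGroup' hN', Subgroup.mem_bot] at hd
  have hminv : x = m⁻¹ * x * m := inv_mul_eq_one.mp hd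
  have hmx : m * x * m⁻¹ = x := by
    have h2 : m * (m⁻¹ * x * m) * m⁻¹ = x := by group
    rw [← hminv] at h2
    exact h2
  exact ⟨m, hm, hmx, fun s hs => (hmem s).mp hs⟩


theorem stmt_19 {G : Type*} [Group G] [Finite G] (p : ℕ) (hp : p.Prime) (hodd : Odd p)
    (N : Subgroup G) (hN : N.Normal) (hN' : ¬ p ∣ Nat.card N)
    (hquot : IsPGroup p (G ⧸ N))
    (x : G) (hx : ∃ n : ℕ, orderOf x = p ^ n)
    (P : Sylow p G) (hxP : x ∈ P) :
    ((∀ s ∈ SubG x, s * x = x * s) ↔ ∀ s ∈ (P : Subgroup G), s * x = x * s) ∧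
    ((∀ s ∈ SubG x, s * x * s⁻¹ ∈ Subgroup.zpowers x) ↔
      ∀ s ∈ (P : Subgroup G), s * x * s⁻¹ ∈ Subgroup.zpowers x) := by
  haveI := Fact.mk hp
  classical
  -- `P` is contained in the subnormalizer set.
  have hPsub : ∀ y ∈ (P : Subgroup G), y ∈ subnSet x := by
    intro y hy
    have hcl : Subgroup.closure {x, y} ≤ (P : Subgroup G) := by
      rw [Subgroup.closure_le]
      exact Set.insert_subset_iff.mpr ⟨hxP, Set.singleton_subset_iff.mpr hy⟩
    exact subnormalIn_of_le_of_pgroup hp (P.isPGroup'.to_le hcl)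
      (Subgroup.zpowers_le.mpr (Subgroup.subset_closure (Set.mem_insert x {y})))
  have hzp : IsPGroup p (Subgroup.zpowers x) := by
    obtain ⟨n0, hn0⟩ := hx
    rw [IsPGroup.iff_card]
    exact ⟨n0, by rw [Nat.card_zpowers, hn0]⟩
  -- key decomposition for elements of the subnormalizer set
  have hKey : ∀ y ∈ subnSet x, ∃ a q : G, y = a * q ∧ a * x = x * a ∧
      ∃ R : Sylow p G, x ∈ R ∧ q ∈ (R : Subgroup G) := by
    intro y hy
    set H := Subgroup.closure ({x, y} : Set G) with hHdef
    have hxH : x ∈ H := Subgroup.subset_closure (Set.mem_insert _ _)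
    have hyH : y ∈ H := Subgroup.subset_closure (Set.mem_insert_of_mem _ rfl)
    obtain ⟨nn, f, h0, hl, hsteps⟩ := hy
    obtain ⟨W, hWp, hxW, hWH⟩ :=
      exists_pgroup_normalIn hp nn (Subgroup.zpowers x) H hzp f h0 hl hsteps
    have hcent : ∀ a, a ∈ N → a ∈ H → a * x = x * a := by
      intro a haN haH
      have hc1 : x * a * x⁻¹ * a⁻¹ ∈ N :=
        N.mul_mem (hN.conj_mem a haN x) (N.inv_mem haN)
      have hxW' : x ∈ W := hxW (Subgroup.mem_zpowers x)
      have hc2 : x * a * x⁻¹ * a⁻¹ ∈ W := by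
        have h2 : a * x⁻¹ * a⁻¹ ∈ W := hWH.2 a haH x⁻¹ (W.inv_mem hxW')
        have h3 := W.mul_mem hxW' h2
        simpa [mul_assoc] using h3
      have h4 : x * a * x⁻¹ * a⁻¹ ∈ W ⊓ N := ⟨hc2, hc1⟩
      rw [pInter_eq_bot hp hWp hN', Subgroup.mem_bot] at h4
      exact (mul_inv_eq_iff_eq_mul.mp (mul_inv_eq_one.mp h4)).symm
    set M : Subgroup ↥H := (N ⊓ H).subgroupOf H with hMdef
    haveI hMn : M.Normal := by
      constructor
      intro u hu g
      rw [hMdef, Subgroup.mem_subgroupOf] at hu ⊢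
      refine ⟨?_, SetLike.coe_mem _⟩
      have h5 : ((g * u * g⁻¹ : ↥H) : G) = ↑g * ↑u * (↑g)⁻¹ := by simp
      rw [h5]
      exact hN.conj_mem _ hu.1 _
    have hMcard : ¬ p ∣ Nat.card M := by
      intro hdvd
      apply hN'
      have h1 : Nat.card M = Nat.card ↥(N ⊓ H) :=
        Nat.card_congr (Subgroup.subgroupOfEquivOfLe inf_le_right).toEquiv
      exact dvd_trans (h1 ▸ hdvd) (Subgroup.card_dvd_of_le inf_le_left)
    have hquotH : IsPGroup p (↥H ⧸ M) := by
      intro z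
      induction z using QuotientGroup.induction_on with
      | H h' =>
        obtain ⟨k, hk⟩ := hquot (((h' : ↥H) : G) : G ⧸ N)
        refine ⟨k, ?_⟩
        have hmem : ((h' : ↥H) : G) ^ (p ^ k) ∈ N := by
          rw [← QuotientGroup.eq_one_iff, QuotientGroup.mk_pow]
          exact hk
        have hmem2 : (h' : ↥H) ^ (p ^ k) ∈ M := by
          rw [hMdef, Subgroup.mem_subgroupOf]
          refine ⟨?_, SetLike.coe_mem _⟩
          rw [SubgroupClass.coe_pow]
          exact hmem
        rw [← QuotientGroup.mk_pow]
        exact (QuotientGroup.eq_one_iff _).mpr hmem2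
    have hx'pg : IsPGroup p (Subgroup.zpowers (⟨x, hxH⟩ : ↥H)) := by
      rw [IsPGroup.iff_card]
      obtain ⟨n0, hn0⟩ := hx
      refine ⟨n0, ?_⟩
      rw [Nat.card_zpowers]
      have h6 := orderOf_injective H.subtype H.subtype_injective (⟨x, hxH⟩ : ↥H)
      rw [← h6]
      exact hn0
    obtain ⟨Q, hQle⟩ := hx'pg.exists_le_sylow
    have hx'Q : (⟨x, hxH⟩ : ↥H) ∈ Q := hQle (Subgroup.mem_zpowers _)
    obtain ⟨m', hm', q', hq', hyq⟩ := exists_decomp hp M hMcard hquotH Q ⟨y, hyH⟩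
    have hyeq : y = (↑m' : G) * ↑q' := by
      have h7 := congrArg (fun z : ↥H => (z : G)) hyq
      simpa using h7
    have hm'NH := Subgroup.mem_subgroupOf.mp hm'
    have hQmap : IsPGroup p ((Q : Subgroup ↥H).map H.subtype) := Q.isPGroup'.map _
    obtain ⟨R, hQR⟩ := hQmap.exists_le_sylow
    exact ⟨↑m', ↑q', hyeq, hcent ↑m' hm'NH.1 hm'NH.2,
      R, hQR (Subgroup.mem_map.mpr ⟨⟨x, hxH⟩, hx'Q, rfl⟩),
      hQR (Subgroup.mem_map.mpr ⟨q', hq', rfl⟩)⟩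
  constructor
  · constructor
    · intro hyp s hs
      exact hyp s (Subgroup.subset_closure (hPsub s hs))
    · intro hc
      have hcen : SubG x ≤ Subgroup.centralizer {x} := by
        rw [SubG, Subgroup.closure_le]
        intro y hy
        rw [SetLike.mem_coe, Subgroup.mem_centralizer_iff]
        intro g hg
        rw [Set.mem_singleton_iff] at hg
        rw [hg]
        obtain ⟨a, q, rfl, hax, R, hxR, hqR⟩ := hKey y hy
        obtain ⟨m, hm, hmx, hmem⟩ := sylow_transfer hp hN hN' hquot P hxP R hxR
        have ht := hc _ (hmem q hqR)
        have hqx : q * x = x * q := by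
          have h2 : m⁻¹ * (q * (m * x * m⁻¹)) * m = m⁻¹ * ((m * x * m⁻¹) * q) * m := by
            calc m⁻¹ * (q * (m * x * m⁻¹)) * m = (m⁻¹ * q * m) * x := by group
            _ = x * (m⁻¹ * q * m) := ht
            _ = m⁻¹ * ((m * x * m⁻¹) * q) * m := by group
          have h3 := mul_left_cancel (mul_right_cancel h2)
          rw [hmx] at h3
          exact h3
        calc x * (a * q) = (x * a) * q := (mul_assoc _ _ _).symm
        _ = (a * x) * q := by rw [← hax]
        _ = a * (x * q) := mul_assoc _ _ _
        _ = a * (q * x) := by rw [← hqx]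
        _ = (a * q) * x := (mul_assoc _ _ _).symm
      intro s hs
      exact (Subgroup.mem_centralizer_iff.mp (hcen hs) x (Set.mem_singleton x)).symm
  · constructor
    · intro hyp s hs
      exact hyp s (Subgroup.subset_closure (hPsub s hs))
    · intro hc
      set T : Subgroup G :=
        { carrier := {s : G | s * x * s⁻¹ ∈ Subgroup.zpowers x}
          one_mem' := by simp
          mul_mem' := by
            intro a b ha hb
            simp only [Set.mem_setOf_eq] at ha hb ⊢
            obtain ⟨j, hj⟩ := Subgroup.mem_zpowers_iff.mp ha
            obtain ⟨k, hk⟩ := Subgroup.mem_zpowers_iff.mp hb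
            refine Subgroup.mem_zpowers_iff.mpr ⟨j * k, ?_⟩
            calc x ^ (j * k) = (x ^ j) ^ k := by rw [zpow_mul]
            _ = (a * x * a⁻¹) ^ k := by rw [hj]
            _ = a * x ^ k * a⁻¹ := conj_zpow
            _ = a * (b * x * b⁻¹) * a⁻¹ := by rw [hk]
            _ = (a * b) * x * (a * b)⁻¹ := by group
          inv_mem' := by
            intro a ha
            simp only [Set.mem_setOf_eq] at ha ⊢
            obtain ⟨k, hk⟩ := Subgroup.mem_zpowers_iff.mp ha
            have hu : (a⁻¹ * x * a) ^ k = x := by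
              have h1 : (a⁻¹ * x * (a⁻¹)⁻¹) ^ k = a⁻¹ * x ^ k * (a⁻¹)⁻¹ := conj_zpow
              rw [inv_inv] at h1
              rw [h1, hk]
              group
            have hle : Subgroup.zpowers x ≤ Subgroup.zpowers (a⁻¹ * x * a) :=
              Subgroup.zpowers_le.mpr (Subgroup.mem_zpowers_iff.mpr ⟨k, hu⟩)
            have hcard : Nat.card (Subgroup.zpowers (a⁻¹ * x * a))
                ≤ Nat.card (Subgroup.zpowers x) := by
              rw [Nat.card_zpowers, Nat.card_zpowers]
              have h2 : orderOf ((MulAut.conj a⁻¹).toMonoidHom x) = orderOf x :=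
                orderOf_injective (MulAut.conj a⁻¹).toMonoidHom (MulAut.conj a⁻¹).injective x
              have h3 : (MulAut.conj a⁻¹).toMonoidHom x = a⁻¹ * x * a := by
                show (MulAut.conj a⁻¹) x = a⁻¹ * x * a
                rw [MulAut.conj_apply, inv_inv]
              rw [← h3, h2]
            have heq : Subgroup.zpowers x = Subgroup.zpowers (a⁻¹ * x * a) :=
              Subgroup.eq_of_le_of_card_ge hle hcard
            have h4 : a⁻¹ * x * a ∈ Subgroup.zpowers (a⁻¹ * x * a) := Subgroup.mem_zpowers _
            rw [← heq] at h4
            show a⁻¹ * x * (a⁻¹)⁻¹ ∈ Subgroup.zpowers x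
            rwa [inv_inv] }
        with hTdef
      have hsub : SubG x ≤ T := by
        rw [SubG, Subgroup.closure_le]
        intro y hy
        obtain ⟨a, q, rfl, hax, R, hxR, hqR⟩ := hKey y hy
        obtain ⟨m, hm, hmx, hmem⟩ := sylow_transfer hp hN hN' hquot P hxP R hxR
        have ht := hc _ (hmem q hqR)
        obtain ⟨k, hk⟩ := Subgroup.mem_zpowers_iff.mp ht
        have hmx' : m⁻¹ * x * m = x := by
          have h2 : m⁻¹ * (m * x * m⁻¹) * m = x := by group
          rw [hmx] at h2
          exact h2
        have hqxq : q * x * q⁻¹ = x ^ k := by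
          calc q * x * q⁻¹
              = m * ((m⁻¹ * q * m) * (m⁻¹ * x * m) * (m⁻¹ * q * m)⁻¹) * m⁻¹ := by group
          _ = m * ((m⁻¹ * q * m) * x * (m⁻¹ * q * m)⁻¹) * m⁻¹ := by rw [hmx']
          _ = m * x ^ k * m⁻¹ := by rw [← hk]
          _ = (m * x * m⁻¹) ^ k := conj_zpow.symm
          _ = x ^ k := by rw [hmx]
        have hcomm : a * x ^ k = x ^ k * a := by
          have hC : Commute a x := hax
          exact (hC.zpow_right k).eq
        show (a * q) * x * (a * q)⁻¹ ∈ Subgroup.zpowers x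
        refine Subgroup.mem_zpowers_iff.mpr ⟨k, ?_⟩
        calc x ^ k = a * x ^ k * a⁻¹ := by rw [hcomm]; group
        _ = a * (q * x * q⁻¹) * a⁻¹ := by rw [hqxq]
        _ = (a * q) * x * (a * q)⁻¹ := by group
      intro s hs
      exact hsub hs
end
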